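/- arXiv:2206.03047 — 5 statements merged into one kernel-verified Lean document; each statement's English description precedes it below -/
import Mathlib

section
/- For every n ≥ 0, the Tower of Hanoi-Fibonacci with n disks admits a solution, and the minimal possible length of a solution is F_{n+2} − 1 (so an optimal solution passes through exactly F_{n+2} distinct states). -/
/-- A `k`-Fibonacci move on states of the Tower of Hanoi-Fibonacci with `n` disks.
Disks are numbered `1,…,n`; disk `k` corresponds to index `i : Fin n` with `(i : ℕ) + 1 = k`.
Pegs are `Fin 3` (`0 = A`, `1 = B`, `2 = C`). -/
def FibMove (n k : ℕ) (s s' : Fin n → Fin 3) : Prop :=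
  1 ≤ k ∧ k ≤ n ∧
  ∃ X Y Z : Fin 3, X ≠ Y ∧ Y ≠ Z ∧ X ≠ Z ∧
    (∀ i : Fin n, (i : ℕ) + 1 = k → s i = X) ∧
    (∀ i : Fin n, (i : ℕ) + 1 < k → s i ≠ X) ∧
    (∀ i : Fin n, (i : ℕ) + 1 < k → s i = Y) ∧
    (∀ i : Fin n, ((i : ℕ) + 1 = k ∨ (i : ℕ) + 2 = k) → s' i = Z) ∧
    (∀ i : Fin n, (i : ℕ) + 1 ≠ k → (i : ℕ) + 2 ≠ k → s' i = s i)

/-- `s 0, s 1, …, s m` is a solution of length `m` of the Tower of Hanoi-Fibonacci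
with `n` disks: it starts with all disks on peg `A = 0`, ends with all disks on
peg `C = 2`, and each step is a Fibonacci move. -/
def IsSolution (n m : ℕ) (s : ℕ → (Fin n → Fin 3)) : Prop :=
  (s 0 = fun _ => 0) ∧ (s m = fun _ => 2) ∧ ∀ i < m, ∃ k, FibMove n k (s i) (s (i + 1))

def L (n : ℕ) : ℕ := Nat.fib (n + 2) - 1

def thd (a b : Fin 3) : Fin 3 := ⟨(6 - a.1 - b.1) % 3, by omega⟩

lemma Lsucc : ∀ n, L (n + 1) = L n + L (n - 1) + 1 := by
  intro n
  match n with
  | 0 => decide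
  | m + 1 =>
    show Nat.fib (m + 4) - 1 = (Nat.fib (m + 3) - 1) + (Nat.fib (m + 2) - 1) + 1
    have h1 : Nat.fib (m + 2 + 2) = Nat.fib (m + 2) + Nat.fib (m + 2 + 1) := Nat.fib_add_two
    have h2 : 0 < Nat.fib (m + 2) := Nat.fib_pos.2 (by omega)
    have h3 : 0 < Nat.fib (m + 3) := Nat.fib_pos.2 (by omega)
    have h4 : Nat.fib (m + 2 + 2) = Nat.fib (m + 4) := by norm_num
    have h5 : Nat.fib (m + 2 + 1) = Nat.fib (m + 3) := by norm_num
    omega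

lemma thd_ne_left : ∀ a b : Fin 3, a ≠ b → thd a b ≠ a := by decide
lemma thd_ne_right : ∀ a b : Fin 3, a ≠ b → thd a b ≠ b := by decide
lemma thd_eq : ∀ a b c : Fin 3, a ≠ b → b ≠ c → a ≠ c → thd a b = c := by decide
lemma thd_thd : ∀ a b : Fin 3, a ≠ b → thd a (thd a b) = b := by decide

def phi : (n : ℕ) → (Fin n → Fin 3) → Fin 3 → ℕ
  | 0, _, _ => 0
  | n + 1, s, t =>
    if s (Fin.last n) = t then phi n (Fin.init s) t
    else
      min (phi n (Fin.init s) (thd (s (Fin.last n)) t) + 1 + L (n - 1))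
          (phi n (Fin.init s) t + (3 + L (n - 2) + L (n - 1)))

lemma phi_const (n : ℕ) (p t : Fin 3) :
    phi n (fun _ => p) t = if p = t then 0 else L n := by
  induction n generalizing t with
  | zero => split <;> simp [phi, L]
  | succ n ih =>
    have hinit : Fin.init (fun _ : Fin (n+1) => p) = fun _ : Fin n => p := rfl
    by_cases hpt : p = t
    · subst hpt
      show (if p = p then phi n (Fin.init fun _ => p) p else _) = _
      rw [if_pos rfl, hinit, ih, if_pos rfl, if_pos rfl]
    · have h1 : p ≠ thd p t := fun h => thd_ne_left p t hpt h.symm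
      have h2 : L (n + 1) = L n + L (n - 1) + 1 := Lsucc n
      show (if p = t then phi n (Fin.init fun _ => p) t else
        min (phi n (Fin.init fun _ => p) (thd p t) + 1 + L (n - 1))
          (phi n (Fin.init fun _ => p) t + (3 + L (n - 2) + L (n - 1)))) = _
      rw [if_neg hpt, hinit, ih, ih, if_neg h1, if_neg hpt, if_neg hpt]
      omega

lemma phi_succ (n : ℕ) (s : Fin (n+1) → Fin 3) (t : Fin 3) :
    phi (n+1) s t =
      if s (Fin.last n) = t then phi n (Fin.init s) t
      else
        min (phi n (Fin.init s) (thd (s (Fin.last n)) t) + 1 + L (n - 1))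
            (phi n (Fin.init s) t + (3 + L (n - 2) + L (n - 1))) := rfl

lemma phi_alpha1 (n : ℕ) (X Y : Fin 3) (h : X ≠ Y) :
    phi (n+1) (Fin.snoc (fun _ => Y) X) X = L n := by
  have hlast : (Fin.snoc (fun _ => Y) X : Fin (n+1) → Fin 3) (Fin.last n) = X := Fin.snoc_last _ _
  have hinit : Fin.init (Fin.snoc (fun _ => Y) X : Fin (n+1) → Fin 3) = fun _ => Y :=
    Fin.init_snoc _ _
  rw [phi_succ, hlast, hinit, if_pos rfl, phi_const, if_neg (Ne.symm h)]

lemma phi_alpha3 (n : ℕ) (X Y : Fin 3) (h : X ≠ Y) :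
    phi (n+1) (Fin.snoc (fun _ => Y) X) (thd X Y) = 1 + L (n-1) := by
  have h1 : ¬ X = thd X Y := fun h' => thd_ne_left X Y h h'.symm
  have h2 : ¬ Y = thd X Y := fun h' => thd_ne_right X Y h h'.symm
  have hlast : (Fin.snoc (fun _ => Y) X : Fin (n+1) → Fin 3) (Fin.last n) = X := Fin.snoc_last _ _
  have hinit : Fin.init (Fin.snoc (fun _ => Y) X : Fin (n+1) → Fin 3) = fun _ => Y :=
    Fin.init_snoc _ _
  rw [phi_succ, hlast, hinit, if_neg h1, thd_thd X Y h, phi_const, phi_const,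
    if_pos rfl, if_neg h2]
  omega

lemma phi_alpha2 (n : ℕ) (X Y : Fin 3) (h : X ≠ Y) :
    phi (n+1) (Fin.snoc (fun _ => Y) X) Y
      = min (L n + 1 + L (n-1)) (3 + L (n-2) + L (n-1)) := by
  have h1 : ¬ Y = thd X Y := fun h' => thd_ne_right X Y h h'.symm
  have hlast : (Fin.snoc (fun _ => Y) X : Fin (n+1) → Fin 3) (Fin.last n) = X := Fin.snoc_last _ _
  have hinit : Fin.init (Fin.snoc (fun _ => Y) X : Fin (n+1) → Fin 3) = fun _ => Y :=
    Fin.init_snoc _ _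
  rw [phi_succ, hlast, hinit, if_neg h, phi_const, phi_const, if_neg h1, if_pos rfl,
    Nat.zero_add]


lemma snoc_lt {α : Type*} {m : ℕ} (f : Fin m → α) (x : α) (i : Fin (m+1)) (h : (i:ℕ) < m) :
    (Fin.snoc f x : Fin (m+1) → α) i = f ⟨i.1, h⟩ := by
  simp [Fin.snoc, h]
  rfl

lemma snoc_last_of {α : Type*} {m : ℕ} (f : Fin m → α) (x : α) (i : Fin (m+1))
    (h : (i:ℕ) = m) : (Fin.snoc f x : Fin (m+1) → α) i = x := by
  simp [Fin.snoc, h]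

lemma fibMove_init {n k : ℕ} {s s' : Fin (n+1) → Fin 3} (hk : k ≤ n)
    (h : FibMove (n+1) k s s') :
    FibMove n k (Fin.init s) (Fin.init s') ∧ s' (Fin.last n) = s (Fin.last n) := by
  obtain ⟨hk1, _, X, Y, Z, hXY, hYZ, hXZ, h1, h2, h3, h4, h5⟩ := h
  constructor
  · refine ⟨hk1, hk, X, Y, Z, hXY, hYZ, hXZ, ?_, ?_, ?_, ?_, ?_⟩
    · intro i hi; exact h1 i.castSucc (by simpa using hi)
    · intro i hi; exact h2 i.castSucc (by simpa using hi)
    · intro i hi; exact h3 i.castSucc (by simpa using hi)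
    · intro i hi; exact h4 i.castSucc (by simpa using hi)
    · intro i hi1 hi2; exact h5 i.castSucc (by simpa using hi1) (by simpa using hi2)
  · exact h5 (Fin.last n) (by simp; omega) (by simp; omega)

lemma snoc2_lt {α : Type*} {m : ℕ} (f : Fin m → α) (x y : α) (i : Fin (m+2))
    (h : (i:ℕ) < m) :
    (Fin.snoc (Fin.snoc f x : Fin (m+1) → α) y : Fin (m+2) → α) i = f ⟨i.1, h⟩ := by
  have h2 : (i:ℕ) < m + 1 := by omega
  simp [Fin.snoc, h, h2]
  rfl

lemma snoc2_mid {α : Type*} {m : ℕ} (f : Fin m → α) (x y : α) (i : Fin (m+2))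
    (h : (i:ℕ) = m) :
    (Fin.snoc (Fin.snoc f x : Fin (m+1) → α) y : Fin (m+2) → α) i = x := by
  have h2 : (i:ℕ) < m + 1 := by omega
  simp [Fin.snoc, h, h2]

lemma fin3_cases : ∀ t X Y Z : Fin 3, X ≠ Y → Y ≠ Z → X ≠ Z → t = X ∨ t = Y ∨ t = Z := by
  decide

theorem phi_lip (n : ℕ) :
    ∀ k (s s' : Fin n → Fin 3) (t : Fin 3), FibMove n k s s' →
      phi n s t ≤ phi n s' t + 1 := by
  induction n with
  | zero =>
    rintro k s s' t ⟨h1, h2, -⟩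
    omega
  | succ n ih =>
    rintro k s s' t hm
    rcases Nat.lt_or_ge k (n+1) with hk | hk
    · -- small move, restrict
      obtain ⟨hres, hlast⟩ := fibMove_init (by omega) hm
      rw [phi_succ, phi_succ, hlast]
      by_cases hpt : s (Fin.last n) = t
      · rw [if_pos hpt, if_pos hpt]
        exact ih k _ _ t hres
      · rw [if_neg hpt, if_neg hpt]
        have hA := ih k _ _ (thd (s (Fin.last n)) t) hres
        have hB := ih k _ _ t hres
        simp only [Nat.min_def]
        split_ifs <;> omega
    · -- the top move
      have hk' : k = n + 1 := by obtain ⟨-, h2, -⟩ := hm; omega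
      subst hk'
      obtain ⟨-, -, X, Y, Z, hXY, hYZ, hXZ, h1, h2, h3, h4, h5⟩ := hm
      have hsl : s (Fin.last n) = X := h1 (Fin.last n) (by simp)
      have hs : s = Fin.snoc (fun _ => Y) X := by
        funext i
        rcases Nat.lt_or_ge (i : ℕ) n with hi | hi
        · rw [snoc_lt _ _ _ hi]; exact h3 i (by omega)
        · have hin : (i:ℕ) = n := by have := i.isLt; omega
          rw [snoc_last_of _ _ _ hin]; exact h1 i (by omega)
      have hs'l : s' (Fin.last n) = Z := h4 (Fin.last n) (Or.inl (by simp))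
      cases n with
      | zero =>
        have hse : s = fun _ => X := by
          funext i
          have hi : i = Fin.last 0 := Fin.ext (by omega)
          rw [hi, hsl]
        have hs'e : s' = fun _ => Z := by
          funext i
          have hi : i = Fin.last 0 := Fin.ext (by omega)
          rw [hi, hs'l]
        rw [hse, hs'e, phi_const, phi_const]
        have hL1 : L (0+1) = 1 := rfl
        split_ifs <;> omega
      | succ m =>
        have hs' : s' = Fin.snoc (Fin.snoc (fun _ => Y) Z) Z := by
          funext i
          rcases Nat.lt_or_ge (i : ℕ) m with hi | hi
          · rw [snoc2_lt _ _ _ _ hi, h5 i (by omega) (by omega)]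
            exact h3 i (by omega)
          · rcases Nat.lt_or_ge (i : ℕ) (m+1) with hi2 | hi2
            · rw [snoc2_mid _ _ _ _ (by omega : (i:ℕ) = m)]
              exact h4 i (Or.inr (by omega))
            · rw [snoc_last_of _ _ _ (by have := i.isLt; omega : (i:ℕ) = m+1)]
              exact h4 i (Or.inl (by omega))
        rw [hs, hs']
        have hRlast : (Fin.snoc (Fin.snoc (fun _ => Y) Z) Z : Fin (m+2) → Fin 3)
            (Fin.last (m+1)) = Z := Fin.snoc_last _ _
        have hRinit : Fin.init (Fin.snoc (Fin.snoc (fun _ => Y) Z) Z : Fin (m+2) → Fin 3)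
            = Fin.snoc (fun _ => Y) Z := Fin.init_snoc _ _
        have hZY : Z ≠ Y := Ne.symm hYZ
        have hLs1 : L (m+1) = L m + L (m-1) + 1 := Lsucc m
        have hLs2 : L (m+2) = L (m+1) + L m + 1 := Lsucc (m+1)
        have e3 : phi (m+1) (Fin.snoc (fun _ => Y) Z) X = 1 + L (m-1) := by
          rw [show (X:Fin 3) = thd Z Y from (thd_eq Z Y X hZY (Ne.symm hXY) (Ne.symm hXZ)).symm]
          exact phi_alpha3 m Z Y hZY
        have en1 : L (m+1-1) = L m := rfl
        have en2 : L (m+1-2) = L (m-1) := rfl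
        rcases fin3_cases t X Y Z hXY hYZ hXZ with ht | ht | ht <;> rw [ht]
        · -- t = X
          rw [phi_alpha1 (m+1) X Y hXY, phi_succ, hRlast, hRinit, if_neg (Ne.symm hXZ),
            thd_eq Z X Y (Ne.symm hXZ) hXY hZY, phi_alpha2 m Z Y hZY, e3, en1, en2]
          simp only [Nat.min_def]
          split_ifs <;> omega
        · -- t = Y
          rw [phi_alpha2 (m+1) X Y hXY, phi_succ, hRlast, hRinit, if_neg hZY]
          rw [thd_eq Z Y X hZY (Ne.symm hXY) (Ne.symm hXZ), e3, phi_alpha2 m Z Y hZY, en1, en2]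
          simp only [Nat.min_def]
          split_ifs <;> omega
        · -- t = Z
          have eL : phi (m+2) (Fin.snoc (fun _ => Y) X) Z = 1 + L m := by
            rw [show (Z:Fin 3) = thd X Y from (thd_eq X Y Z hXY hYZ hXZ).symm]
            exact phi_alpha3 (m+1) X Y hXY
          rw [eL, phi_succ, hRlast, hRinit, if_pos rfl, phi_alpha1 m Z Y hZY]
          omega

theorem lower_bound (n m : ℕ) (s : ℕ → Fin n → Fin 3) (h : IsSolution n m s) : L n ≤ m := by
  obtain ⟨h0, hm, hstep⟩ := h
  have key : ∀ j, j ≤ m → phi n (s (m - j)) 2 ≤ j := by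
    intro j
    induction j with
    | zero =>
      intro _
      rw [Nat.sub_zero, hm, phi_const, if_pos rfl]
    | succ j ihj =>
      intro hj
      obtain ⟨k, hk⟩ := hstep (m - (j+1)) (by omega)
      have h2 : m - (j+1) + 1 = m - j := by omega
      have hlip := phi_lip n k _ _ 2 hk
      rw [h2] at hlip
      have := ihj (by omega)
      omega
  have hfin := key m le_rfl
  rw [Nat.sub_self, h0, phi_const, if_neg (by decide : ¬(0:Fin 3) = 2)] at hfin
  exact hfin

lemma snoc_const {α : Type*} (m : ℕ) (x : α) :
    (Fin.snoc (fun _ : Fin m => x) x : Fin (m+1) → α) = fun _ => x := by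
  funext i
  rcases Nat.lt_or_ge (i:ℕ) m with h | h
  · rw [snoc_lt _ _ _ h]
  · rw [snoc_last_of _ _ _ (by have := i.isLt; omega)]

lemma fibMove_snoc {n k : ℕ} {a b : Fin n → Fin 3} (x : Fin 3) (h : FibMove n k a b) :
    FibMove (n+1) k (Fin.snoc a x) (Fin.snoc b x) := by
  obtain ⟨hk1, hk2, X, Y, Z, hXY, hYZ, hXZ, h1, h2, h3, h4, h5⟩ := h
  refine ⟨hk1, by omega, X, Y, Z, hXY, hYZ, hXZ, ?_, ?_, ?_, ?_, ?_⟩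
  · intro i hi
    have hin : (i:ℕ) < n := by omega
    rw [snoc_lt _ _ _ hin]; exact h1 ⟨i.1, hin⟩ hi
  · intro i hi
    have hin : (i:ℕ) < n := by omega
    rw [snoc_lt _ _ _ hin]; exact h2 ⟨i.1, hin⟩ hi
  · intro i hi
    have hin : (i:ℕ) < n := by omega
    rw [snoc_lt _ _ _ hin]; exact h3 ⟨i.1, hin⟩ hi
  · intro i hi
    have hin : (i:ℕ) < n := by rcases hi with hi | hi <;> omega
    rw [snoc_lt _ _ _ hin]; exact h4 ⟨i.1, hin⟩ hi
  · intro i hi1 hi2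
    rcases Nat.lt_or_ge (i:ℕ) n with hin | hin
    · rw [snoc_lt _ _ _ hin, snoc_lt _ _ _ hin]; exact h5 ⟨i.1, hin⟩ hi1 hi2
    · have hie : (i:ℕ) = n := by have := i.isLt; omega
      rw [snoc_last_of _ _ _ hie, snoc_last_of _ _ _ hie]

lemma fibMove_one (p q : Fin 3) (h : p ≠ q) : FibMove 1 1 (fun _ => p) (fun _ => q) := by
  refine ⟨le_rfl, le_rfl, p, thd p q, q, Ne.symm (thd_ne_left p q h), thd_ne_right p q h, h,
    fun i _ => rfl, ?_, ?_, fun i _ => rfl, ?_⟩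
  · intro i hi; exact absurd hi (by omega)
  · intro i hi; exact absurd hi (by omega)
  · intro i hi1 _; exact absurd (by have := i.isLt; omega : (i:ℕ) + 1 = 1) hi1

lemma fibMove_top (n : ℕ) (p q r : Fin 3) (hpq : p ≠ q) (hpr : p ≠ r) (hrq : r ≠ q) :
    FibMove (n+2) (n+2) (Fin.snoc (fun _ => r) p)
      (Fin.snoc (Fin.snoc (fun _ => r) q) q) := by
  refine ⟨by omega, le_rfl, p, r, q, hpr, hrq, hpq, ?_, ?_, ?_, ?_, ?_⟩
  · intro i hi
    rw [snoc_last_of _ _ _ (by omega)]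
  · intro i hi
    rw [snoc_lt _ _ _ (by omega)]; exact Ne.symm hpr
  · intro i hi
    rw [snoc_lt _ _ _ (by omega)]
  · intro i hi
    rcases hi with hi | hi
    · rw [snoc_last_of _ _ _ (by omega)]
    · rw [snoc2_mid _ _ _ _ (by omega)]
  · intro i hi1 hi2
    have hin : (i:ℕ) < n := by have := i.isLt; omega
    rw [snoc2_lt _ _ _ _ hin, snoc_lt _ _ _ (by omega)]

def solF : (n : ℕ) → Fin 3 → Fin 3 → ℕ → (Fin n → Fin 3)
  | 0, _, _, _ => fun i => i.elim0
  | 1, p, q, i => if i = 0 then (fun _ => p) else (fun _ => q)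
  | (n+2), p, q, i =>
    if i ≤ L (n+1) then Fin.snoc (solF (n+1) p (thd p q) i) p
    else Fin.snoc (Fin.snoc (solF n (thd p q) q (i - (L (n+1) + 1))) q) q

lemma solF_zero : ∀ (n : ℕ) (p q : Fin 3), solF n p q 0 = fun _ => p
  | 0, p, q => funext fun i => i.elim0
  | 1, p, q => by simp [solF]
  | (n+2), p, q => by
    rw [show solF (n+2) p q 0 = Fin.snoc (solF (n+1) p (thd p q) 0) p from
      if_pos (Nat.zero_le _)]
    rw [solF_zero (n+1) p (thd p q), snoc_const]

lemma solF_ge : ∀ (n : ℕ) (p q : Fin 3) (i : ℕ), L n ≤ i → solF n p q i = fun _ => q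
  | 0, p, q, i, _ => funext fun j => j.elim0
  | 1, p, q, i, h => by
    have h1 : L 1 = 1 := rfl
    have : ¬ (i = 0) := by omega
    simp [solF, this]
  | (n+2), p, q, i, h => by
    have hL : L (n+2) = L (n+1) + L n + 1 := Lsucc (n+1)
    have h1 : ¬ (i ≤ L (n+1)) := by omega
    rw [show solF (n+2) p q i
        = Fin.snoc (Fin.snoc (solF n (thd p q) q (i - (L (n+1) + 1))) q) q from
      if_neg h1]
    rw [solF_ge n (thd p q) q _ (by omega), snoc_const, snoc_const]

lemma solF_move : ∀ (n : ℕ) (p q : Fin 3), p ≠ q → ∀ i, i < L n →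
    ∃ k, FibMove n k (solF n p q i) (solF n p q (i+1))
  | 0, _, _, _, i, hi => absurd hi (by simp [L])
  | 1, p, q, hpq, i, hi => by
    have h1 : L 1 = 1 := rfl
    have h0 : i = 0 := by omega
    subst h0
    refine ⟨1, ?_⟩
    rw [show solF 1 p q 0 = (fun _ => p) from by simp [solF],
      show solF 1 p q 1 = (fun _ => q) from by simp [solF]]
    exact fibMove_one p q hpq
  | (n+2), p, q, hpq, i, hi => by
    have hpr : p ≠ thd p q := Ne.symm (thd_ne_left p q hpq)
    have hrq : thd p q ≠ q := thd_ne_right p q hpq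
    have hL : L (n+2) = L (n+1) + L n + 1 := Lsucc (n+1)
    rcases lt_trichotomy i (L (n+1)) with hc | hc | hc
    · obtain ⟨k, hk⟩ := solF_move (n+1) p (thd p q) hpr i hc
      refine ⟨k, ?_⟩
      rw [show solF (n+2) p q i = Fin.snoc (solF (n+1) p (thd p q) i) p from
          if_pos (le_of_lt hc),
        show solF (n+2) p q (i+1) = Fin.snoc (solF (n+1) p (thd p q) (i+1)) p from
          if_pos (by omega : i + 1 ≤ L (n+1))]
      exact fibMove_snoc p hk
    · refine ⟨n+2, ?_⟩
      have e1 : solF (n+2) p q i = Fin.snoc (fun _ => thd p q) p := by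
        rw [show solF (n+2) p q i = Fin.snoc (solF (n+1) p (thd p q) i) p from
          if_pos (le_of_eq hc)]
        rw [solF_ge (n+1) p (thd p q) i (le_of_eq hc.symm)]
      have e2 : solF (n+2) p q (i+1)
          = Fin.snoc (Fin.snoc (fun _ => thd p q) q) q := by
        rw [show solF (n+2) p q (i+1)
            = Fin.snoc (Fin.snoc (solF n (thd p q) q ((i+1) - (L (n+1) + 1))) q) q from
          if_neg (by omega : ¬ (i + 1 ≤ L (n+1)))]
        rw [show (i+1) - (L (n+1) + 1) = 0 from by omega, solF_zero]
      rw [e1, e2]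
      exact fibMove_top n p q (thd p q) hpq hpr hrq
    · have hj : i - (L (n+1) + 1) < L n := by omega
      obtain ⟨k, hk⟩ := solF_move n (thd p q) q hrq _ hj
      refine ⟨k, ?_⟩
      rw [show solF (n+2) p q i
          = Fin.snoc (Fin.snoc (solF n (thd p q) q (i - (L (n+1) + 1))) q) q from
          if_neg (by omega : ¬ (i ≤ L (n+1))),
        show solF (n+2) p q (i+1)
          = Fin.snoc (Fin.snoc (solF n (thd p q) q ((i+1) - (L (n+1) + 1))) q) q from
          if_neg (by omega : ¬ (i + 1 ≤ L (n+1)))]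
      rw [show (i+1) - (L (n+1) + 1) = (i - (L (n+1) + 1)) + 1 from by omega]
      exact fibMove_snoc q (fibMove_snoc q hk)

/-- For every `n ≥ 0`, the Tower of Hanoi-Fibonacci with `n` disks
admits a solution, and the minimal possible length of a solution is `F (n+2) - 1`
(so an optimal solution passes through exactly `F (n+2)` distinct states). -/
theorem hanoiFibonacci_solvable_and_optimal_length (n : ℕ) :
    (∃ s, IsSolution n (Nat.fib (n + 2) - 1) s) ∧
    (∀ m s, IsSolution n m s → Nat.fib (n + 2) - 1 ≤ m) := by
  have hLn : L n = Nat.fib (n + 2) - 1 := rfl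
  constructor
  · refine ⟨fun i => solF n 0 2 i, solF_zero n 0 2, ?_, ?_⟩
    · exact solF_ge n 0 2 _ (le_of_eq hLn)
    · intro i hi
      exact solF_move n 0 2 (by decide) i (by omega)
  · intro m s h
    have := lower_bound n m s h
    omega
end

section
/- For every n ≥ 0, the Tower of Hanoi-Fibonacci with n disks has exactly one solution of the minimal length F_{n+2} − 1. -/
def hfOther (a b : Fin 3) : Fin 3 := -(a + b)

lemma hfOther_ne_left : ∀ a b : Fin 3, a ≠ b → hfOther a b ≠ a := by decide
lemma hfOther_ne_right : ∀ a b : Fin 3, a ≠ b → hfOther a b ≠ b := by decide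
lemma hf_eq_other : ∀ a b c : Fin 3, a ≠ b → c ≠ a → c ≠ b → c = hfOther a b := by decide
lemma hf_tri : ∀ a b q : Fin 3, a ≠ b → q = a ∨ q = b ∨ q = hfOther a b := by decide
lemma hfOther_other : ∀ p q : Fin 3, p ≠ q → hfOther p (hfOther p q) = q := by decide

def NatMove (n k : ℕ) (s s' : ℕ → Fin 3) : Prop :=
  1 ≤ k ∧ k ≤ n ∧ ∃ X Y Z : Fin 3, X ≠ Y ∧ Y ≠ Z ∧ X ≠ Z ∧
    (∀ j < n, j + 1 = k → s j = X) ∧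
    (∀ j < n, j + 1 < k → s j ≠ X) ∧
    (∀ j < n, j + 1 < k → s j = Y) ∧
    (∀ j < n, (j + 1 = k ∨ j + 2 = k) → s' j = Z) ∧
    (∀ j < n, j + 1 ≠ k → j + 2 ≠ k → s' j = s j)

def phiN : ℕ → (ℕ → Fin 3) → Fin 3 → ℕ
  | 0, _, _ => 0
  | n+1, s, q =>
    if s n = q then phiN n s q
    else min (phiN n s (hfOther (s n) q) + Nat.fib (n+1)) (phiN n s q + Nat.fib (n+2) + 1)

lemma phiN_zero (s : ℕ → Fin 3) (q : Fin 3) : phiN 0 s q = 0 := rfl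

lemma phiN_succ (n : ℕ) (s : ℕ → Fin 3) (q : Fin 3) :
    phiN (n+1) s q =
      if s n = q then phiN n s q
      else min (phiN n s (hfOther (s n) q) + Nat.fib (n+1)) (phiN n s q + Nat.fib (n+2) + 1) := rfl

lemma phiN_congr : ∀ (n : ℕ) (s t : ℕ → Fin 3), (∀ j < n, s j = t j) → ∀ q, phiN n s q = phiN n t q
  | 0, s, t, h, q => rfl
  | n+1, s, t, h, q => by
    have hn : s n = t n := h n (Nat.lt_succ_self n)
    have ih := phiN_congr n s t (fun j hj => h j (Nat.lt_succ_of_lt hj))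
    rw [phiN_succ, phiN_succ, hn, ih q, ih (hfOther (t n) q)]

lemma phiN_all_eq {n : ℕ} {s : ℕ → Fin 3} {q : Fin 3} (h : ∀ j < n, s j = q) : phiN n s q = 0 := by
  induction n with
  | zero => rfl
  | succ n ih =>
    rw [phiN_succ, if_pos (h n (by omega))]
    exact ih (fun j hj => h j (by omega))

lemma phiN_all_ne : ∀ (n : ℕ) {s : ℕ → Fin 3} {p q : Fin 3}, p ≠ q → (∀ j < n, s j = p) →
    phiN n s q = Nat.fib (n+2) - 1
  | 0, s, p, q, hpq, h => rfl
  | n+1, s, p, q, hpq, h => by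
    have hs : s n = p := h n (by omega)
    have h' : ∀ j < n, s j = p := fun j hj => h j (by omega)
    have e1 := phiN_all_ne n (Ne.symm (hfOther_ne_left p q hpq)) h'
    have e2 := phiN_all_ne n hpq h'
    rw [phiN_succ, hs, if_neg hpq, e1, e2]
    have l1 : Nat.fib (n+1+2) = Nat.fib (n+3) := rfl
    have r2 : Nat.fib (n+2) = Nat.fib n + Nat.fib (n+1) := Nat.fib_add_two
    have r3 : Nat.fib (n+3) = Nat.fib (n+1) + Nat.fib (n+2) := Nat.fib_add_two
    have p1 : 0 < Nat.fib (n+1) := Nat.fib_pos.mpr (by omega)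
    omega

lemma phiN_eq_zero : ∀ (n : ℕ) {s : ℕ → Fin 3} {q : Fin 3}, phiN n s q = 0 → ∀ j < n, s j = q := by
  intro n
  induction n with
  | zero => intro s q h j hj; omega
  | succ n ih =>
    intro s q h j hj
    rw [phiN_succ] at h
    by_cases hs : s n = q
    · rw [if_pos hs] at h
      rcases Nat.lt_succ_iff_lt_or_eq.mp hj with hj' | hj'
      · exact ih h j hj'
      · rw [hj']; exact hs
    · rw [if_neg hs] at h
      have p1 : 0 < Nat.fib (n+1) := Nat.fib_pos.mpr (by omega)
      omega

lemma natMove_restrict {n n' k : ℕ} {s s' : ℕ → Fin 3} (hn : n ≤ n') (h : NatMove n' k s s')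
    (hk : k ≤ n) : NatMove n k s s' := by
  obtain ⟨h1, h2, X, Y, Z, hxy, hyz, hxz, c1, c2, c3, c4, c5⟩ := h
  exact ⟨h1, hk, X, Y, Z, hxy, hyz, hxz,
    fun j hj => c1 j (by omega), fun j hj => c2 j (by omega), fun j hj => c3 j (by omega),
    fun j hj => c4 j (by omega), fun j hj => c5 j (by omega)⟩

lemma natMove_keep_top {n k : ℕ} {s s' : ℕ → Fin 3} (h : NatMove (n+1) k s s') (hk : k ≤ n) :
    s' n = s n := by
  obtain ⟨h1, h2, X, Y, Z, hxy, hyz, hxz, c1, c2, c3, c4, c5⟩ := h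
  exact c5 n (by omega) (by omega) (by omega)

lemma natMove_top_move {n : ℕ} {s s' : ℕ → Fin 3} (h : NatMove (n+1) (n+1) s s') :
    ∃ X Y Z : Fin 3, X ≠ Y ∧ Y ≠ Z ∧ X ≠ Z ∧ s n = X ∧ (∀ j < n, s j = Y) ∧
      s' n = Z ∧ (∀ j < n, s' j = if j + 1 = n then Z else Y) := by
  obtain ⟨h1, h2, X, Y, Z, hxy, hyz, hxz, c1, c2, c3, c4, c5⟩ := h
  refine ⟨X, Y, Z, hxy, hyz, hxz, c1 n (by omega) rfl, fun j hj => c3 j (by omega) (by omega),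
    c4 n (by omega) (Or.inl rfl), fun j hj => ?_⟩
  by_cases hj1 : j + 1 = n
  · rw [if_pos hj1]; exact c4 j (by omega) (Or.inr (by omega))
  · rw [if_neg hj1, c5 j (by omega) (by omega) (by omega)]
    exact c3 j (by omega) (by omega)

lemma natMove_lift {n k : ℕ} {s t : ℕ → Fin 3} (h : NatMove n k s t) :
    NatMove (n+1) k s (fun j => if j = n then s n else t j) := by
  obtain ⟨h1, h2, X, Y, Z, hxy, hyz, hxz, c1, c2, c3, c4, c5⟩ := h
  refine ⟨h1, by omega, X, Y, Z, hxy, hyz, hxz, ?_, ?_, ?_, ?_, ?_⟩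
  · intro j hj hk1; exact c1 j (by omega) hk1
  · intro j hj hk1; exact c2 j (by omega) hk1
  · intro j hj hk1; exact c3 j (by omega) hk1
  · intro j hj hor
    have hjn : j < n := by omega
    simp only [if_neg (by omega : ¬ j = n)]
    exact c4 j hjn hor
  · intro j hj hk1 hk2
    by_cases hjn : j = n
    · simp [hjn]
    · simp only [if_neg hjn]
      exact c5 j (by omega) hk1 hk2

lemma natMove_mk_big {n : ℕ} {s : ℕ → Fin 3} {X Y : Fin 3} (hXY : X ≠ Y)
    (hX : s n = X) (hY : ∀ j < n, s j = Y) :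
    NatMove (n+1) (n+1) s (fun j => if j = n ∨ j + 1 = n then hfOther X Y else s j) := by
  refine ⟨by omega, le_refl _, X, Y, hfOther X Y, hXY, Ne.symm (hfOther_ne_right X Y hXY),
    Ne.symm (hfOther_ne_left X Y hXY), ?_, ?_, ?_, ?_, ?_⟩
  · intro j hj hk
    have hjn : j = n := by omega
    subst hjn; exact hX
  · intro j hj hk; rw [hY j (by omega)]; exact Ne.symm hXY
  · intro j hj hk; exact hY j (by omega)
  · intro j hj hor
    have : j = n ∨ j + 1 = n := by omega
    simp only [if_pos this]
  · intro j hj hk1 hk2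
    simp only [if_neg (by omega : ¬ (j = n ∨ j + 1 = n))]

lemma phiN_move : ∀ {n k : ℕ} {s s' : ℕ → Fin 3}, NatMove n k s s' → ∀ q, phiN n s q ≤ phiN n s' q + 1 := by
  intro n
  induction n with
  | zero => intro k s s' h q; exact Nat.le_succ _
  | succ n ih =>
    intro k s s' h q
    have hk2 : k ≤ n + 1 := h.2.1
    by_cases hk : k ≤ n
    · have hr : NatMove n k s s' := natMove_restrict (by omega) h hk
      have htop : s' n = s n := natMove_keep_top h hk
      have ih1 := ih hr q
      have ih2 := ih hr (hfOther (s n) q)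
      rw [phiN_succ, phiN_succ, htop]
      by_cases hq : s n = q
      · rw [if_pos hq, if_pos hq]; omega
      · rw [if_neg hq, if_neg hq]; omega
    · have hk1 : k = n + 1 := by omega
      subst hk1
      obtain ⟨X, Y, Z, hxy, hyz, hxz, hsX, hsY, hs'Z, hs'j⟩ := natMove_top_move h
      cases n with
      | zero =>
        have e1 : phiN (0+1) s q ≤ 1 := by
          rw [phiN_succ (0)]
          have f1 : Nat.fib (0+1) = 1 := rfl
          by_cases h0 : s 0 = q
          · rw [if_pos h0]; exact Nat.zero_le _
          · rw [if_neg h0, phiN_zero, phiN_zero]; omega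
        omega
      | succ m =>
        have hs'm : s' m = Z := by
          have := hs'j m (by omega)
          rwa [if_pos rfl] at this
        have hs'lt : ∀ j < m, s' j = Y := by
          intro j hj
          rw [hs'j j (by omega), if_neg (by omega)]
        have hZo : Z = hfOther X Y := hf_eq_other X Y Z hxy (Ne.symm hxz) (Ne.symm hyz)
        -- evaluations of the tail of s'
        have eYY : phiN m s' Y = 0 := phiN_all_eq hs'lt
        have eYX : phiN m s' X = Nat.fib (m+2) - 1 := phiN_all_ne m (Ne.symm hxy) hs'lt
        have eYZ : phiN m s' Z = Nat.fib (m+2) - 1 := phiN_all_ne m hyz hs'lt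
        have oZX : hfOther Z X = Y :=
          (hf_eq_other Z X Y (Ne.symm hxz) hyz (Ne.symm hxy)).symm
        have oZY : hfOther Z Y = X :=
          (hf_eq_other Z Y X (Ne.symm hyz) hxz hxy).symm
        have oXZ : hfOther X Z = Y :=
          (hf_eq_other X Z Y hxz (Ne.symm hxy) hyz).symm
        have oXY : hfOther X Y = Z := hZo.symm
        have e1 : phiN (m+1) s' Y = min (Nat.fib (m+2) - 1 + Nat.fib (m+1)) (0 + Nat.fib (m+2) + 1) := by
          rw [phiN_succ, hs'm, if_neg (Ne.symm hyz), oZY, eYX, eYY]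
        have e2 : phiN (m+1) s' X = min (0 + Nat.fib (m+1)) (Nat.fib (m+2) - 1 + Nat.fib (m+2) + 1) := by
          rw [phiN_succ, hs'm, if_neg (Ne.symm hxz), oZX, eYY, eYX]
        -- evaluations of the tail of s
        have eSY : phiN (m+1) s Y = 0 := phiN_all_eq hsY
        have eSX : phiN (m+1) s X = Nat.fib (m+1+2) - 1 := phiN_all_ne (m+1) (Ne.symm hxy) hsY
        have eSZ : phiN (m+1) s Z = Nat.fib (m+1+2) - 1 := phiN_all_ne (m+1) hyz hsY
        -- fib facts
        have l1 : Nat.fib (m+1+2) = Nat.fib (m+3) := rfl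
        have l2 : Nat.fib (m+1+1) = Nat.fib (m+2) := rfl
        have r2 : Nat.fib (m+2) = Nat.fib m + Nat.fib (m+1) := Nat.fib_add_two
        have r3 : Nat.fib (m+3) = Nat.fib (m+1) + Nat.fib (m+2) := Nat.fib_add_two
        have p1 : 0 < Nat.fib (m+1) := Nat.fib_pos.mpr (by omega)
        have eL1 : phiN (m+2) s X = Nat.fib (m+3) - 1 := by
          rw [phiN_succ (m+1), hsX, if_pos rfl, eSX]
        have e31 : phiN (m+2) s' X =
            min (phiN (m+1) s' Y + Nat.fib (m+1+1)) (phiN (m+1) s' X + Nat.fib (m+1+2) + 1) := by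
          rw [phiN_succ (m+1), hs'Z, if_neg (Ne.symm hxz), oZX]
        have eL2 : phiN (m+2) s Y =
            min ((Nat.fib (m+1+2) - 1) + Nat.fib (m+1+1)) (0 + Nat.fib (m+1+2) + 1) := by
          rw [phiN_succ (m+1), hsX, if_neg hxy, oXY, eSZ, eSY]
        have e32 : phiN (m+2) s' Y =
            min (phiN (m+1) s' X + Nat.fib (m+1+1)) (phiN (m+1) s' Y + Nat.fib (m+1+2) + 1) := by
          rw [phiN_succ (m+1), hs'Z, if_neg (Ne.symm hyz), oZY]
        have eL3 : phiN (m+2) s Z =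
            min (0 + Nat.fib (m+1+1)) ((Nat.fib (m+1+2) - 1) + Nat.fib (m+1+2) + 1) := by
          rw [phiN_succ (m+1), hsX, if_neg hxz, oXZ, eSY, eSZ]
        have e33 : phiN (m+2) s' Z = Nat.fib (m+2) - 1 := by
          rw [phiN_succ (m+1), hs'Z, if_pos rfl, phiN_succ m, hs'm, if_pos rfl, eYZ]
        have l3 : Nat.fib (m+1+1) = Nat.fib (m+2) := rfl
        rcases hf_tri X Y q hxy with hq | hq | hq
        · rw [hq, eL1, e31, e1, e2]; omega
        · rw [hq, eL2, e32, e1, e2]; omega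
        · rw [← hZo] at hq
          rw [hq, eL3, e33]; omega

lemma phiN_exists : ∀ (n : ℕ) (s : ℕ → Fin 3) (q : Fin 3), phiN n s q ≠ 0 →
    ∃ s', (∃ k, NatMove n k s s') ∧ phiN n s' q + 1 = phiN n s q := by
  intro n
  induction n with
  | zero => intro s q h; exact absurd rfl h
  | succ n ih =>
    intro s q h
    by_cases hq : s n = q
    · -- recurse with the same target
      have h' : phiN n s q ≠ 0 := by
        rw [phiN_succ, if_pos hq] at h; exact h
      obtain ⟨w, ⟨k, hk⟩, hdec⟩ := ih s q h'
      refine ⟨fun j => if j = n then s n else w j, ⟨k, natMove_lift hk⟩, ?_⟩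
      have hv : (if n = n then s n else w n) = s n := by simp
      have hcong : phiN n (fun j => if j = n then s n else w j) q = phiN n w q :=
        phiN_congr n _ w (fun j hj => by simp [Nat.ne_of_lt hj]) q
      rw [phiN_succ, hv, if_pos hq, hcong, phiN_succ (n) s q, if_pos hq]
      exact hdec
    · have hphi : phiN (n+1) s q =
          min (phiN n s (hfOther (s n) q) + Nat.fib (n+1)) (phiN n s q + Nat.fib (n+2) + 1) := by
        rw [phiN_succ, if_neg hq]
      have hZq : hfOther (s n) q ≠ q := hfOther_ne_right (s n) q hq
      have hXZ : s n ≠ hfOther (s n) q := Ne.symm (hfOther_ne_left (s n) q hq)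
      by_cases hbr : phiN n s (hfOther (s n) q) + Nat.fib (n+1) ≤ phiN n s q + Nat.fib (n+2) + 1
      · by_cases hA : phiN n s (hfOther (s n) q) = 0
        · -- the big move, gathered at hfOther (s n) q, moving the top to q
          have hcz : ∀ j < n, s j = hfOther (s n) q := phiN_eq_zero n hA
          have hoz : hfOther (s n) (hfOther (s n) q) = q := hfOther_other (s n) q hq
          refine ⟨fun j => if j = n ∨ j + 1 = n then hfOther (s n) (hfOther (s n) q) else s j,
            ⟨n+1, natMove_mk_big hXZ rfl hcz⟩, ?_⟩
          have hv : (if n = n ∨ n + 1 = n then hfOther (s n) (hfOther (s n) q) else s n) = q := by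
            rw [hoz]; simp
          rw [phiN_succ, hv, if_pos rfl]
          cases n with
          | zero =>
            have f1 : Nat.fib (0+1) = 1 := rfl
            have f2 : Nat.fib (0+2) = 1 := rfl
            rw [phiN_zero, hphi, phiN_zero, phiN_zero]
            omega
          | succ m =>
            have hv2 : (if m = m + 1 ∨ m + 1 = m + 1 then hfOther (s (m+1)) (hfOther (s (m+1)) q) else s m) = q := by
              rw [hoz]; simp
            have hv3 : ∀ j < m, (fun j => if j = m+1 ∨ j + 1 = m+1 then hfOther (s (m+1)) (hfOther (s (m+1)) q) else s j) j = hfOther (s (m+1)) q := by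
              intro j hj
              simp only [if_neg (by omega : ¬ (j = m+1 ∨ j + 1 = m+1))]
              exact hcz j (by omega)
            rw [phiN_succ m, hv2, if_pos rfl]
            have eA : phiN m (fun j => if j = m+1 ∨ j + 1 = m+1 then hfOther (s (m+1)) (hfOther (s (m+1)) q) else s j) q
                = Nat.fib (m+2) - 1 := phiN_all_ne m hZq hv3
            rw [eA, hphi, hA]
            have l2 : Nat.fib (m+1+1) = Nat.fib (m+2) := rfl
            have r3 : Nat.fib (m+1+2) = Nat.fib (m+1) + Nat.fib (m+2) := Nat.fib_add_two
            have p1 : 0 < Nat.fib (m+1) := Nat.fib_pos.mpr (by omega)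
            have p2 : 0 < Nat.fib (m+2) := Nat.fib_pos.mpr (by omega)
            omega
        · -- recurse with target hfOther (s n) q
          obtain ⟨w, ⟨k, hk⟩, hdec⟩ := ih s (hfOther (s n) q) hA
          refine ⟨fun j => if j = n then s n else w j, ⟨k, natMove_lift hk⟩, ?_⟩
          have hv : (if n = n then s n else w n) = s n := by simp
          have hcong : ∀ t, phiN n (fun j => if j = n then s n else w j) t = phiN n w t :=
            phiN_congr n _ w (fun j hj => by simp [Nat.ne_of_lt hj])
          have hB' := phiN_move hk q
          rw [phiN_succ, hv, if_neg hq, hcong, hcong, hphi]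
          omega
      · push_neg at hbr
        by_cases hB : phiN n s q = 0
        · -- big move, gathered at q, moving top to hfOther (s n) q
          have hcq : ∀ j < n, s j = q := phiN_eq_zero n hB
          refine ⟨fun j => if j = n ∨ j + 1 = n then hfOther (s n) q else s j,
            ⟨n+1, natMove_mk_big hq rfl hcq⟩, ?_⟩
          have hv : (if n = n ∨ n + 1 = n then hfOther (s n) q else s n) = hfOther (s n) q := by simp
          cases n with
          | zero =>
            exfalso
            have f1 : Nat.fib (0+1) = 1 := rfl
            have f2 : Nat.fib (0+2) = 1 := rfl
            rw [phiN_zero, phiN_zero] at hbr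
            omega
          | succ m =>
            have hA : phiN (m+1) s (hfOther (s (m+1)) q) = Nat.fib (m+1+2) - 1 :=
              phiN_all_ne (m+1) (Ne.symm hZq) hcq
            have hv2 : (if m = m + 1 ∨ m + 1 = m + 1 then hfOther (s (m+1)) q else s m) = hfOther (s (m+1)) q := by simp
            have hv2' : (if m + 1 = m + 1 ∨ m + 1 + 1 = m + 1 then hfOther (s (m+1)) q else s (m+1)) = hfOther (s (m+1)) q := by simp
            have hv3 : ∀ j < m, (fun j => if j = m+1 ∨ j + 1 = m+1 then hfOther (s (m+1)) q else s j) j = q := by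
              intro j hj
              simp only [if_neg (by omega : ¬ (j = m+1 ∨ j + 1 = m+1))]
              exact hcq j (by omega)
            have oZq : hfOther (hfOther (s (m+1)) q) q = s (m+1) :=
              (hf_eq_other (hfOther (s (m+1)) q) q (s (m+1)) hZq hXZ hq).symm
            have oZX : hfOther (hfOther (s (m+1)) q) (s (m+1)) = q := by
              refine (hf_eq_other _ _ q (Ne.symm hXZ) (Ne.symm hZq) (Ne.symm hq)).symm
            have eq0 : phiN m (fun j => if j = m+1 ∨ j + 1 = m+1 then hfOther (s (m+1)) q else s j) q = 0 :=
              phiN_all_eq hv3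
            have eqX : phiN m (fun j => if j = m+1 ∨ j + 1 = m+1 then hfOther (s (m+1)) q else s j) (s (m+1)) = Nat.fib (m+2) - 1 :=
              phiN_all_ne m (Ne.symm hq) hv3
            have e1 : phiN (m+1) (fun j => if j = m+1 ∨ j + 1 = m+1 then hfOther (s (m+1)) q else s j) (s (m+1))
                = min (0 + Nat.fib (m+1)) ((Nat.fib (m+2) - 1) + Nat.fib (m+2) + 1) := by
              rw [phiN_succ m, hv2, if_neg (Ne.symm hXZ), oZX, eq0, eqX]
            have e2 : phiN (m+1) (fun j => if j = m+1 ∨ j + 1 = m+1 then hfOther (s (m+1)) q else s j) q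
                = min ((Nat.fib (m+2) - 1) + Nat.fib (m+1)) (0 + Nat.fib (m+2) + 1) := by
              rw [phiN_succ m, hv2, if_neg hZq, oZq, eqX, eq0]
            rw [phiN_succ (m+1), hv2', if_neg hZq, oZq, e1, e2, hphi, hA, hB]
            have l2 : Nat.fib (m+1+1) = Nat.fib (m+2) := rfl
            have r2 : Nat.fib (m+2) = Nat.fib m + Nat.fib (m+1) := Nat.fib_add_two
            have r3 : Nat.fib (m+1+2) = Nat.fib (m+1) + Nat.fib (m+2) := Nat.fib_add_two
            have p1 : 0 < Nat.fib (m+1) := Nat.fib_pos.mpr (by omega)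
            rw [hA, hB] at hbr
            omega
        · -- recurse with target q
          obtain ⟨w, ⟨k, hk⟩, hdec⟩ := ih s q hB
          refine ⟨fun j => if j = n then s n else w j, ⟨k, natMove_lift hk⟩, ?_⟩
          have hv : (if n = n then s n else w n) = s n := by simp
          have hcong : ∀ t, phiN n (fun j => if j = n then s n else w j) t = phiN n w t :=
            phiN_congr n _ w (fun j hj => by simp [Nat.ne_of_lt hj])
          have hA' := phiN_move hk (hfOther (s n) q)
          rw [phiN_succ, hv, if_neg hq, hcong, hcong, hphi]
          omega

lemma phiN_steps' {n : ℕ} (q : Fin 3) (s : ℕ → ℕ → Fin 3) (a b : ℕ) (hab : a ≤ b)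
    (h : ∀ i, a ≤ i → i < b → ∃ k, NatMove n k (s i) (s (i+1))) :
    phiN n (s a) q ≤ phiN n (s b) q + (b - a) := by
  have key : ∀ d, a + d ≤ b → phiN n (s a) q ≤ phiN n (s (a+d)) q + d := by
    intro d
    induction d with
    | zero => intro _; simp
    | succ d ih =>
      intro hd
      obtain ⟨k, hk⟩ := h (a+d) (by omega) (by omega)
      have h1 := phiN_move hk q
      have h2 := ih (by omega)
      have h3 : a + d + 1 = a + (d+1) := rfl
      rw [h3] at h1
      omega
  have := key (b - a) (by omega)
  rwa [show a + (b - a) = b from by omega] at this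

lemma hf_phase2_step {m : ℕ} {q : Fin 3} {u u' : ℕ → Fin 3} {k : ℕ}
    (hk : NatMove (m+2) k u u') (h1 : u (m+1) = q) (h2 : u m = q)
    (hdec : phiN (m+2) u' q + 1 = phiN (m+2) u q) : k ≤ m := by
  by_contra hgt
  have hk2 : k ≤ m + 2 := hk.2.1
  have hcase : k = m + 1 ∨ k = m + 2 := by omega
  rcases hcase with hk1 | hk1
  · subst hk1
    obtain ⟨hb1, hb2, X, Y, Z, hxy, hyz, hxz, c1, c2, c3, c4, c5⟩ := hk
    have hXq : X = q := by rw [← h2]; exact (c1 m (by omega) rfl).symm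
    have hYq : Y ≠ q := by rw [← hXq]; exact Ne.symm hxy
    have hZq : Z ≠ q := by rw [← hXq]; exact Ne.symm hxz
    have hbelow : ∀ j < m, u j = Y := fun j hj => c3 j (by omega) (by omega)
    have htop' : u' (m+1) = q := by
      rw [c5 (m+1) (by omega) (by omega) (by omega)]; exact h1
    have hmid' : u' m = Z := c4 m (by omega) (Or.inl rfl)
    have eu : phiN (m+2) u q = Nat.fib (m+2) - 1 := by
      rw [phiN_succ (m+1), h1, if_pos rfl, phiN_succ m, h2, if_pos rfl]
      exact phiN_all_ne m hYq hbelow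
    cases m with
    | zero =>
      have f2 : Nat.fib (0+2) = 1 := rfl
      omega
    | succ m' =>
      have hmid2 : u' m' = Z := c4 m' (by omega) (Or.inr (by omega))
      have hbelow2 : ∀ j < m', u' j = Y := by
        intro j hj
        rw [c5 j (by omega) (by omega) (by omega)]
        exact hbelow j (by omega)
      have oA : hfOther Z q = Y := (hf_eq_other Z q Y hZq hyz hYq).symm
      have oB : hfOther Z Y = q := (hf_eq_other Z Y q (Ne.symm hyz) (Ne.symm hZq) (Ne.symm hYq)).symm
      have e0 : phiN m' u' Y = 0 := phiN_all_eq hbelow2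
      have e0' : phiN m' u' q = Nat.fib (m'+2) - 1 := phiN_all_ne m' hYq hbelow2
      have e1 : phiN (m'+1) u' Y = min (Nat.fib (m'+2) - 1 + Nat.fib (m'+1)) (0 + Nat.fib (m'+2) + 1) := by
        rw [phiN_succ m', hmid2, if_neg (Ne.symm hyz), oB, e0', e0]
      have e2 : phiN (m'+1) u' q = min (0 + Nat.fib (m'+1)) (Nat.fib (m'+2) - 1 + Nat.fib (m'+2) + 1) := by
        rw [phiN_succ m', hmid2, if_neg hZq, oA, e0, e0']
      have e3 : phiN (m'+1+2) u' q =
          min (phiN (m'+1) u' Y + Nat.fib (m'+1+1)) (phiN (m'+1) u' q + Nat.fib (m'+1+2) + 1) := by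
        rw [phiN_succ (m'+1+1), htop', if_pos rfl, phiN_succ (m'+1), hmid', if_neg hZq, oA]
      have l1 : Nat.fib (m'+1+1) = Nat.fib (m'+2) := rfl
      have l2 : Nat.fib (m'+1+2) = Nat.fib (m'+3) := rfl
      have r2 : Nat.fib (m'+2) = Nat.fib m' + Nat.fib (m'+1) := Nat.fib_add_two
      have r3 : Nat.fib (m'+3) = Nat.fib (m'+1) + Nat.fib (m'+2) := Nat.fib_add_two
      have p1 : 0 < Nat.fib (m'+1) := Nat.fib_pos.mpr (by omega)
      rw [e3, e1, e2] at hdec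
      omega
  · subst hk1
    obtain ⟨hb1, hb2, X, Y, Z, hxy, hyz, hxz, c1, c2, c3, c4, c5⟩ := hk
    have hne : u m ≠ X := c2 m (by omega) (by omega)
    have hXq : X = q := by
      have := c1 (m+1) (by omega) rfl
      rw [h1] at this; exact this.symm
    rw [h2, hXq] at hne
    exact hne rfl

lemma hf_key {m : ℕ} {p q : Fin 3} (hpq : p ≠ q) (s : ℕ → ℕ → Fin 3)
    (h0 : ∀ j < m+2, s 0 j = p)
    (hL : ∀ j < m+2, s (Nat.fib (m+4) - 1) j = q)
    (hmv : ∀ i < Nat.fib (m+4) - 1, ∃ k, NatMove (m+2) k (s i) (s (i+1))) :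
    (∀ i ≤ Nat.fib (m+3) - 1, s i (m+1) = p) ∧
    (∀ i < Nat.fib (m+3) - 1, ∃ k, NatMove (m+1) k (s i) (s (i+1))) ∧
    (∀ j < m+1, s (Nat.fib (m+3) - 1) j = hfOther p q) ∧
    (∀ i, Nat.fib (m+3) - 1 < i → i ≤ Nat.fib (m+4) - 1 → s i (m+1) = q ∧ s i m = q) ∧
    (∀ j < m, s (Nat.fib (m+3) - 1 + 1) j = hfOther p q) ∧
    (∀ i, Nat.fib (m+3) - 1 < i → i < Nat.fib (m+4) - 1 → ∃ k, NatMove m k (s i) (s (i+1))) := by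
  have p1 : 0 < Nat.fib (m+1) := Nat.fib_pos.mpr (by omega)
  have p2 : 0 < Nat.fib (m+2) := Nat.fib_pos.mpr (by omega)
  have r2 : Nat.fib (m+2) = Nat.fib m + Nat.fib (m+1) := Nat.fib_add_two
  have r3 : Nat.fib (m+3) = Nat.fib (m+1) + Nat.fib (m+2) := Nat.fib_add_two
  have r4 : Nat.fib (m+4) = Nat.fib (m+2) + Nat.fib (m+3) := Nat.fib_add_two
  have l2 : Nat.fib (m+1+1) = Nat.fib (m+2) := rfl
  have l3 : Nat.fib (m+1+2) = Nat.fib (m+3) := rfl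
  have l4 : Nat.fib (m+2+2) = Nat.fib (m+4) := rfl
  have hgeo : ∀ i ≤ Nat.fib (m+4) - 1, phiN (m+2) (s i) q = (Nat.fib (m+4) - 1) - i := by
    intro i hi
    have e0 : phiN (m+2) (s 0) q = Nat.fib (m+2+2) - 1 := phiN_all_ne (m+2) hpq h0
    have eL : phiN (m+2) (s (Nat.fib (m+4) - 1)) q = 0 := phiN_all_eq hL
    have u1 := phiN_steps' q s 0 i (by omega) (fun i' h1 h2 => hmv i' (by omega))
    have u2 := phiN_steps' q s i (Nat.fib (m+4) - 1) hi (fun i' h1 h2 => hmv i' h2)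
    omega
  have hex : ∃ i, i < Nat.fib (m+4) - 1 ∧ s (i+1) (m+1) ≠ s i (m+1) := by
    by_contra hc
    push_neg at hc
    have hall : ∀ i, i ≤ Nat.fib (m+4) - 1 → s i (m+1) = p := by
      intro i
      induction i with
      | zero => intro _; exact h0 (m+1) (by omega)
      | succ i ih =>
        intro hi
        rw [hc i (by omega)]
        exact ih (by omega)
    have h1 := hall (Nat.fib (m+4) - 1) (le_refl _)
    rw [hL (m+1) (by omega)] at h1
    exact hpq h1.symm
  have H : ∃ t, (t < Nat.fib (m+4) - 1 ∧ s (t+1) (m+1) ≠ s t (m+1)) ∧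
      ∀ i < t, ¬(i < Nat.fib (m+4) - 1 ∧ s (i+1) (m+1) ≠ s i (m+1)) :=
    ⟨Nat.find hex, Nat.find_spec hex, fun i hi => Nat.find_min hex hi⟩
  obtain ⟨t, ⟨htL, htch⟩, htmin0⟩ := H
  have htmin : ∀ i < t, s (i+1) (m+1) = s i (m+1) := by
    intro i hi
    by_contra hne
    exact htmin0 i hi ⟨by omega, hne⟩
  have htop : ∀ i ≤ t, s i (m+1) = p := by
    intro i
    induction i with
    | zero => intro _; exact h0 (m+1) (by omega)
    | succ i ih =>
      intro hi
      rw [htmin i (by omega)]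
      exact ih (by omega)
  have hk_small : ∀ i < t, ∃ k, NatMove (m+1) k (s i) (s (i+1)) := by
    intro i hi
    obtain ⟨k, hk⟩ := hmv i (by omega)
    have hkle : k ≤ m+1 := by
      by_contra hgt
      have hkk : k = m+2 := by have := hk.2.1; omega
      subst hkk
      obtain ⟨X, Y, Z, hxy, hyz, hxz, hsX, hsY, hs'Z, _⟩ := natMove_top_move hk
      have hch := htmin i hi
      rw [hs'Z, hsX] at hch
      exact hxz hch.symm
    exact ⟨k, natMove_restrict (by omega) hk hkle⟩
  obtain ⟨k, hkmv⟩ := hmv t htL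
  have hkbig : k = m+2 := by
    by_contra hne
    have hkle : k ≤ m+1 := by have := hkmv.2.1; omega
    exact htch (natMove_keep_top hkmv hkle)
  subst hkbig
  obtain ⟨X, Y, Z, hxy, hyz, hxz, hsX, hsY, hs'Z, hs'j⟩ := natMove_top_move hkmv
  have hsXp : s t (m+1) = p := htop t (le_refl t)
  have hXp : X = p := hsX.symm.trans hsXp
  rw [hXp] at hxy hxz
  -- rule out Y = q
  have hYq : Y ≠ q := by
    intro hYq
    have e0' := phiN_steps' q s 0 t (by omega) (fun i h1 h2 => hk_small i h2)
    have ea : phiN (m+1) (s 0) q = Nat.fib (m+1+2) - 1 :=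
      phiN_all_ne (m+1) hpq (fun j hj => h0 j (by omega))
    have eb : phiN (m+1) (s t) q = 0 := phiN_all_eq (fun j hj => (hsY j hj).trans hYq)
    have hg := hgeo t (by omega)
    have ephi : phiN (m+2) (s t) q =
        min ((Nat.fib (m+1+2) - 1) + Nat.fib (m+1+1)) (0 + Nat.fib (m+1+2) + 1) := by
      rw [phiN_succ (m+1), hsXp, if_neg hpq,
        phiN_all_ne (m+1) (Ne.symm (hfOther_ne_right p q hpq)) (fun j hj => (hsY j hj).trans hYq), eb]
    rw [ea] at e0'
    rw [eb] at e0'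
    omega
  have hpz : p ≠ hfOther p q := Ne.symm (hfOther_ne_left p q hpq)
  have hYZ0 : Y = hfOther p q := by
    rcases hf_tri p q Y hpq with h | h | h
    · exact absurd h (Ne.symm hxy)
    · exact absurd h hYq
    · exact h
  rw [hYZ0] at hsY hyz hs'j
  -- t is forced
  have ephi2 : phiN (m+2) (s t) q = Nat.fib (m+1+1) := by
    rw [phiN_succ (m+1), hsXp, if_neg hpq, phiN_all_eq hsY,
      phiN_all_ne (m+1) (hfOther_ne_right p q hpq) hsY]
    omega
  have htT : t = Nat.fib (m+3) - 1 := by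
    have hg := hgeo t (by omega)
    omega
  subst htT
  -- the target of the big move is q
  have hZq : Z = q := by
    rcases hf_tri p (hfOther p q) Z hpz with h | h | h
    · exact absurd h (Ne.symm hxz)
    · exact absurd h (Ne.symm hyz)
    · rw [h, hfOther_other p q hpq]
  rw [hZq] at hs'Z hs'j
  -- phase 2 invariant
  have base1 : s (Nat.fib (m+3) - 1 + 1) (m+1) = q := hs'Z
  have base2 : s (Nat.fib (m+3) - 1 + 1) m = q := by
    have := hs'j m (by omega)
    rwa [if_pos rfl] at this
  have hinv : ∀ d, Nat.fib (m+3) - 1 + 1 + d ≤ Nat.fib (m+4) - 1 →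
      s (Nat.fib (m+3) - 1 + 1 + d) (m+1) = q ∧ s (Nat.fib (m+3) - 1 + 1 + d) m = q := by
    intro d
    induction d with
    | zero => intro _; exact ⟨base1, base2⟩
    | succ d ih =>
      intro hd
      have ihd := ih (by omega)
      obtain ⟨k', hk'⟩ := hmv (Nat.fib (m+3) - 1 + 1 + d) (by omega)
      have hdec : phiN (m+2) (s (Nat.fib (m+3) - 1 + 1 + d + 1)) q + 1
          = phiN (m+2) (s (Nat.fib (m+3) - 1 + 1 + d)) q := by
        have g1 := hgeo (Nat.fib (m+3) - 1 + 1 + d) (by omega)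
        have g2 := hgeo (Nat.fib (m+3) - 1 + 1 + d + 1) (by omega)
        omega
      have hkle := hf_phase2_step hk' ihd.1 ihd.2 hdec
      have e1 : s (Nat.fib (m+3) - 1 + 1 + d + 1) (m+1) = s (Nat.fib (m+3) - 1 + 1 + d) (m+1) :=
        natMove_keep_top hk' (by omega)
      have e2 : s (Nat.fib (m+3) - 1 + 1 + d + 1) m = s (Nat.fib (m+3) - 1 + 1 + d) m := by
        obtain ⟨hb1, hb2, X', Y', Z', _, _, _, _, _, _, _, c5⟩ := hk'
        exact c5 m (by omega) (by omega) (by omega)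
      exact ⟨e1.trans ihd.1, e2.trans ihd.2⟩
  have K4 : ∀ i, Nat.fib (m+3) - 1 < i → i ≤ Nat.fib (m+4) - 1 → s i (m+1) = q ∧ s i m = q := by
    intro i hi1 hi2
    have := hinv (i - (Nat.fib (m+3) - 1 + 1)) (by omega)
    rwa [show Nat.fib (m+3) - 1 + 1 + (i - (Nat.fib (m+3) - 1 + 1)) = i from by omega] at this
  have K6 : ∀ i, Nat.fib (m+3) - 1 < i → i < Nat.fib (m+4) - 1 →
      ∃ k, NatMove m k (s i) (s (i+1)) := by
    intro i hi1 hi2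
    obtain ⟨k', hk'⟩ := hmv i hi2
    have h4 := K4 i hi1 (by omega)
    have hdec : phiN (m+2) (s (i+1)) q + 1 = phiN (m+2) (s i) q := by
      have g1 := hgeo i (by omega)
      have g2 := hgeo (i+1) (by omega)
      omega
    have hkle := hf_phase2_step hk' h4.1 h4.2 hdec
    exact ⟨k', natMove_restrict (by omega) hk' hkle⟩
  have K5 : ∀ j < m, s (Nat.fib (m+3) - 1 + 1) j = hfOther p q := by
    intro j hj
    rw [hs'j j (by omega), if_neg (by omega)]
  exact ⟨htop, hk_small, hsY, K4, K5, K6⟩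

theorem hf_uniq : ∀ (n : ℕ) (p q : Fin 3), p ≠ q → ∀ s s' : ℕ → ℕ → Fin 3,
    (∀ j < n, s 0 j = p) → (∀ j < n, s (Nat.fib (n+2) - 1) j = q) →
    (∀ i < Nat.fib (n+2) - 1, ∃ k, NatMove n k (s i) (s (i+1))) →
    (∀ j < n, s' 0 j = p) → (∀ j < n, s' (Nat.fib (n+2) - 1) j = q) →
    (∀ i < Nat.fib (n+2) - 1, ∃ k, NatMove n k (s' i) (s' (i+1))) →
    ∀ i ≤ Nat.fib (n+2) - 1, ∀ j < n, s i j = s' i j := by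
  intro n
  induction n using Nat.strong_induction_on with
  | _ n ih =>
    match n with
    | 0 => intro p q hpq s s' _ _ _ _ _ _ i hi j hj; omega
    | 1 =>
      intro p q hpq s s' h0 hL _ h0' hL' _ i hi j hj
      have f3 : Nat.fib (1+2) = 2 := rfl
      have hj0 : j = 0 := by omega
      subst hj0
      have hii : i = 0 ∨ i = 1 := by omega
      rcases hii with h | h <;> subst h
      · rw [h0 0 (by omega), h0' 0 (by omega)]
      · have a1 : s 1 0 = q := hL 0 (by omega)
        have a2 : s' 1 0 = q := hL' 0 (by omega)
        rw [a1, a2]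
    | (m+2) =>
      intro p q hpq s s' h0 hL hmv h0' hL' hmv'
      have p1 : 0 < Nat.fib (m+1) := Nat.fib_pos.mpr (by omega)
      have p2 : 0 < Nat.fib (m+2) := Nat.fib_pos.mpr (by omega)
      have p3 : 0 < Nat.fib (m+3) := Nat.fib_pos.mpr (by omega)
      have r3 : Nat.fib (m+3) = Nat.fib (m+1) + Nat.fib (m+2) := Nat.fib_add_two
      have r4 : Nat.fib (m+4) = Nat.fib (m+2) + Nat.fib (m+3) := Nat.fib_add_two
      have l4 : Nat.fib (m+2+2) = Nat.fib (m+4) := rfl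
      have l3 : Nat.fib (m+1+2) = Nat.fib (m+3) := rfl
      have lm : Nat.fib (m+2) - 1 ≤ Nat.fib (m+2) - 1 := le_refl _
      have hLe : ∀ j < m+2, s (Nat.fib (m+4) - 1) j = q := fun j hj => by
        have := hL j hj; rwa [l4] at this
      have hLe' : ∀ j < m+2, s' (Nat.fib (m+4) - 1) j = q := fun j hj => by
        have := hL' j hj; rwa [l4] at this
      have hmve : ∀ i < Nat.fib (m+4) - 1, ∃ k, NatMove (m+2) k (s i) (s (i+1)) := fun i hi =>
        hmv i (by omega)
      have hmve' : ∀ i < Nat.fib (m+4) - 1, ∃ k, NatMove (m+2) k (s' i) (s' (i+1)) := fun i hi =>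
        hmv' i (by omega)
      obtain ⟨K1, K2, K3, K4, K5, K6⟩ := hf_key hpq s h0 hLe hmve
      obtain ⟨K1', K2', K3', K4', K5', K6'⟩ := hf_key hpq s' h0' hLe' hmve'
      have hpz : p ≠ hfOther p q := Ne.symm (hfOther_ne_left p q hpq)
      have hzq : hfOther p q ≠ q := hfOther_ne_right p q hpq
      -- phase 1 uniqueness from IH at m+1
      have sub1 := ih (m+1) (by omega) p (hfOther p q) hpz s s'
        (fun j hj => h0 j (by omega)) (fun j hj => K3 j hj) (fun i hi => K2 i (by omega))
        (fun j hj => h0' j (by omega)) (fun j hj => K3' j hj) (fun i hi => K2' i (by omega))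
      -- phase 2 uniqueness from IH at m
      have harith : Nat.fib (m+3) - 1 + 1 + (Nat.fib (m+2) - 1) = Nat.fib (m+4) - 1 := by omega
      have sub2 := ih m (by omega) (hfOther p q) q hzq
        (fun i => s (Nat.fib (m+3) - 1 + 1 + i)) (fun i => s' (Nat.fib (m+3) - 1 + 1 + i))
        (fun j hj => K5 j hj)
        (fun j hj => by
          show s (Nat.fib (m+3) - 1 + 1 + (Nat.fib (m+2) - 1)) j = q
          rw [harith]; exact hLe j (by omega))
        (fun i hi => K6 (Nat.fib (m+3) - 1 + 1 + i) (by omega) (by omega))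
        (fun j hj => K5' j hj)
        (fun j hj => by
          show s' (Nat.fib (m+3) - 1 + 1 + (Nat.fib (m+2) - 1)) j = q
          rw [harith]; exact hLe' j (by omega))
        (fun i hi => K6' (Nat.fib (m+3) - 1 + 1 + i) (by omega) (by omega))
      intro i hi j hj
      by_cases hiT : i ≤ Nat.fib (m+3) - 1
      · rcases Nat.lt_or_ge j (m+1) with hj1 | hj2
        · exact sub1 i (by rw [l3]; exact hiT) j hj1
        · have hj2' : j = m+1 := by omega
          subst hj2'
          rw [K1 i hiT, K1' i hiT]
      · have hTi : Nat.fib (m+3) - 1 < i := by omega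
        have hiL : i ≤ Nat.fib (m+4) - 1 := by have := hi; omega
        rcases Nat.lt_or_ge j m with hj1 | hj2
        · have h5 : s (Nat.fib (m+3) - 1 + 1 + (i - (Nat.fib (m+3) - 1 + 1))) j
              = s' (Nat.fib (m+3) - 1 + 1 + (i - (Nat.fib (m+3) - 1 + 1))) j :=
            sub2 (i - (Nat.fib (m+3) - 1 + 1)) (by omega) j hj1
          rwa [show Nat.fib (m+3) - 1 + 1 + (i - (Nat.fib (m+3) - 1 + 1)) = i from by omega] at h5
        · have h4 := K4 i hTi hiL
          have h4' := K4' i hTi hiL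
          have : j = m ∨ j = m+1 := by omega
          rcases this with hjm | hjm <;> subst hjm
          · rw [h4.2, h4'.2]
          · rw [h4.1, h4'.1]


lemma fibMove_to_nat {n k : ℕ} {σ σ' : Fin n → Fin 3} (h : FibMove n k σ σ') :
    NatMove n k (fun j => if hj : j < n then σ ⟨j, hj⟩ else 0)
      (fun j => if hj : j < n then σ' ⟨j, hj⟩ else 0) := by
  obtain ⟨h1, h2, X, Y, Z, hxy, hyz, hxz, c1, c2, c3, c4, c5⟩ := h
  refine ⟨h1, h2, X, Y, Z, hxy, hyz, hxz, ?_, ?_, ?_, ?_, ?_⟩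
  · intro j hj hk; simp only [dif_pos hj]; exact c1 ⟨j, hj⟩ hk
  · intro j hj hk; simp only [dif_pos hj]; exact c2 ⟨j, hj⟩ hk
  · intro j hj hk; simp only [dif_pos hj]; exact c3 ⟨j, hj⟩ hk
  · intro j hj hk; simp only [dif_pos hj]; exact c4 ⟨j, hj⟩ hk
  · intro j hj hk1 hk2; simp only [dif_pos hj]; exact c5 ⟨j, hj⟩ hk1 hk2

lemma natMove_to_fib {n k : ℕ} {t t' : ℕ → Fin 3} (h : NatMove n k t t') :
    FibMove n k (fun v : Fin n => t v) (fun v : Fin n => t' v) := by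
  obtain ⟨h1, h2, X, Y, Z, hxy, hyz, hxz, c1, c2, c3, c4, c5⟩ := h
  exact ⟨h1, h2, X, Y, Z, hxy, hyz, hxz,
    fun i hi => c1 i i.isLt hi, fun i hi => c2 i i.isLt hi, fun i hi => c3 i i.isLt hi,
    fun i hi => c4 i i.isLt hi, fun i ha hb => c5 i i.isLt ha hb⟩

noncomputable def hfNext (n : ℕ) (s : ℕ → Fin 3) : ℕ → Fin 3 :=
  if h : phiN n s 2 = 0 then s else Classical.choose (phiN_exists n s 2 h)

lemma hfNext_spec {n : ℕ} {s : ℕ → Fin 3} (h : phiN n s 2 ≠ 0) :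
    (∃ k, NatMove n k s (hfNext n s)) ∧ phiN n (hfNext n s) 2 + 1 = phiN n s 2 := by
  simp only [hfNext, dif_neg h]
  exact Classical.choose_spec (phiN_exists n s 2 h)

noncomputable def hfPath (n : ℕ) : ℕ → ℕ → Fin 3 := fun i => (hfNext n)^[i] (fun _ => 0)

lemma hfPath_succ (n i : ℕ) : hfPath n (i+1) = hfNext n (hfPath n i) :=
  Function.iterate_succ_apply' _ _ _

lemma hfPath_phi (n : ℕ) : ∀ i, phiN n (hfPath n i) 2 = (Nat.fib (n+2) - 1) - i := by
  intro i
  induction i with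
  | zero =>
    have h := phiN_all_ne n (p := 0) (q := 2) (s := hfPath n 0) (by decide) (fun j hj => rfl)
    simpa using h
  | succ i ih =>
    rw [hfPath_succ]
    by_cases h : phiN n (hfPath n i) 2 = 0
    · have he : hfNext n (hfPath n i) = hfPath n i := dif_pos h
      rw [he]
      omega
    · have := (hfNext_spec h).2
      omega

lemma hfPath_moves (n : ℕ) {i : ℕ} (hi : i < Nat.fib (n+2) - 1) :
    ∃ k, NatMove n k (hfPath n i) (hfPath n (i+1)) := by
  have h := hfPath_phi n i
  have hne : phiN n (hfPath n i) 2 ≠ 0 := by omega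
  rw [hfPath_succ]
  exact (hfNext_spec hne).1

/-- For every `n ≥ 0`, the Tower of Hanoi-Fibonacci with `n` disks
has exactly one solution of the minimal length `F (n+2) - 1`. -/
theorem hanoiFibonacci_unique_optimal_solution (n : ℕ) :
    (∀ m s, IsSolution n m s → Nat.fib (n + 2) - 1 ≤ m) ∧
    ∃ s, IsSolution n (Nat.fib (n + 2) - 1) s ∧
      ∀ s', IsSolution n (Nat.fib (n + 2) - 1) s' →
        ∀ i ≤ Nat.fib (n + 2) - 1, s' i = s i := by
  constructor
  · intro m s hs
    obtain ⟨hs0, hsm, hsmv⟩ := hs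
    have hmvN : ∀ i, 0 ≤ i → i < m → ∃ k, NatMove n k
        (fun j => if hj : j < n then s i ⟨j, hj⟩ else 0)
        (fun j => if hj : j < n then s (i+1) ⟨j, hj⟩ else 0) := by
      intro i _ hi
      obtain ⟨k, hk⟩ := hsmv i hi
      exact ⟨k, fibMove_to_nat hk⟩
    have hst := phiN_steps' 2 (fun i j => if hj : j < n then s i ⟨j, hj⟩ else 0) 0 m
      (by omega) hmvN
    have hst2 : phiN n (fun j => if hj : j < n then s 0 ⟨j, hj⟩ else 0) 2
        ≤ phiN n (fun j => if hj : j < n then s m ⟨j, hj⟩ else 0) 2 + (m - 0) := hst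
    have e0 : phiN n (fun j => if hj : j < n then s 0 ⟨j, hj⟩ else 0) 2 = Nat.fib (n+2) - 1 := by
      apply phiN_all_ne n (p := 0) (by decide)
      intro j hj
      simp only [dif_pos hj, hs0]
    have em : phiN n (fun j => if hj : j < n then s m ⟨j, hj⟩ else 0) 2 = 0 := by
      apply phiN_all_eq
      intro j hj
      simp only [dif_pos hj, hsm]
    omega
  · have hpath0 : phiN n (hfPath n (Nat.fib (n+2) - 1)) 2 = 0 := by
      rw [hfPath_phi]
      omega
    refine ⟨fun i v => hfPath n i v, ⟨?_, ?_, ?_⟩, ?_⟩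
    · funext v; rfl
    · funext v
      exact phiN_eq_zero n hpath0 v v.isLt
    · intro i hi
      obtain ⟨k, hk⟩ := hfPath_moves n hi
      exact ⟨k, natMove_to_fib hk⟩
    · intro s' hs' i hi
      obtain ⟨h0', hm', hmv'⟩ := hs'
      have key := hf_uniq n 0 2 (by decide)
        (fun i j => if hj : j < n then s' i ⟨j, hj⟩ else 0) (hfPath n)
        (fun j hj => by simp only [dif_pos hj, h0'])
        (fun j hj => by simp only [dif_pos hj, hm'])
        (fun i hi => by
          obtain ⟨k, hk⟩ := hmv' i hi
          exact ⟨k, fibMove_to_nat hk⟩)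
        (fun j hj => rfl)
        (fun j hj => phiN_eq_zero n hpath0 j hj)
        (fun i hi => hfPath_moves n hi)
      funext v
      show s' i v = hfPath n i v.val
      have hv2 : (if hj : (v : ℕ) < n then s' i ⟨(v : ℕ), hj⟩ else 0) = hfPath n i v.val :=
        key i hi v.val v.isLt
      rw [dif_pos v.isLt] at hv2
      simpa only [Fin.eta] using hv2
end

section
/- For every n ≥ 2, the optimal solution s_0, s_1, …, s_{F_{n+2}−1} of the Tower of Hanoi-Fibonacci with n disks satisfies: s_{F_{n+1}−1} is the state with disk n on peg A and disks 1,…,n−1 on peg B, and s_{F_{n+1}} is the state with disks 1,…,n−2 on peg B and disks n−1 and n on peg C; in particular the F_{n+1}-th move is the unique n-Fibonacci move of the solution. -/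
namespace HanoiFibAux

theorem fin3_third : ∀ y : Fin 3, y ≠ 0 → y ≠ 2 → y = 1 := by decide
theorem fin3_exists_ne : ∀ x : Fin 3, ∃ y : Fin 3, y ≠ x := by decide

theorem filter_ne_nonempty (x : Fin 3) :
    (Finset.univ.filter (fun y => y ≠ x)).Nonempty := by
  obtain ⟨y, hy⟩ := fin3_exists_ne x
  exact ⟨y, by simp [hy]⟩

def D : (n : ℕ) → (Fin n → Fin 3) → Fin 3 → ℕ
  | 0, _, _ => 0
  | n+1, σ, Z =>
    if σ (Fin.last n) = Z then D n (fun i => σ i.castSucc) Z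
    else Nat.fib (n+1) +
      (Finset.univ.filter (fun Y => Y ≠ σ (Fin.last n))).inf' (filter_ne_nonempty _)
        (fun Y => D n (fun i => σ i.castSucc) Y)

theorem D_succ (n : ℕ) (σ : Fin (n+1) → Fin 3) (Z : Fin 3) :
    D (n+1) σ Z =
    if σ (Fin.last n) = Z then D n (fun i => σ i.castSucc) Z
    else Nat.fib (n+1) +
      (Finset.univ.filter (fun Y => Y ≠ σ (Fin.last n))).inf' (filter_ne_nonempty _)
        (fun Y => D n (fun i => σ i.castSucc) Y) := by
  rw [D]

theorem D_le : ∀ (n : ℕ) (σ : Fin n → Fin 3) (Z : Fin 3), D n σ Z ≤ Nat.fib (n+2) - 1 := by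
  intro n
  induction n with
  | zero => intro σ Z; simp [D]
  | succ n IH =>
    intro σ Z
    have h2 : Nat.fib (n+1+2) = Nat.fib (n+1) + Nat.fib (n+1+1) := Nat.fib_add_two
    have e1 : Nat.fib (n+1+1) = Nat.fib (n+2) := rfl
    have h3 : 0 < Nat.fib (n+2) := Nat.fib_pos.mpr (by omega)
    rw [D_succ]
    by_cases h : σ (Fin.last n) = Z
    · rw [if_pos h]
      have := IH (fun i => σ i.castSucc) Z
      omega
    · rw [if_neg h]
      obtain ⟨Y, hY⟩ := fin3_exists_ne (σ (Fin.last n))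
      have hm : Y ∈ Finset.univ.filter (fun y => y ≠ σ (Fin.last n)) := by simp [hY]
      have hinf : (Finset.univ.filter (fun y => y ≠ σ (Fin.last n))).inf'
            (filter_ne_nonempty _) (fun Y => D n (fun i => σ i.castSucc) Y)
          ≤ D n (fun i => σ i.castSucc) Y := Finset.inf'_le _ hm
      have := IH (fun i => σ i.castSucc) Y
      omega

theorem le_D_of_const : ∀ (n : ℕ) (σ : Fin n → Fin 3) (Y Z : Fin 3), (∀ i, σ i = Y) → Y ≠ Z →
    Nat.fib (n+2) - 1 ≤ D n σ Z := by
  intro n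
  induction n with
  | zero => intro σ Y Z _ _; simp [D]
  | succ n IH =>
    intro σ Y Z hσ h
    rw [D_succ, if_neg (by rw [hσ (Fin.last n)]; exact h)]
    have hinf : Nat.fib (n+2) - 1 ≤ (Finset.univ.filter (fun y => y ≠ σ (Fin.last n))).inf'
        (filter_ne_nonempty _) (fun Y => D n (fun i => σ i.castSucc) Y) := by
      apply Finset.le_inf'
      intro y hy
      have hy' : y ≠ Y := by
        simpa [hσ (Fin.last n)] using (Finset.mem_filter.mp hy).2
      exact IH (fun i => σ i.castSucc) Y y (fun i => hσ _) (Ne.symm hy')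
    have h2 : Nat.fib (n+1+2) = Nat.fib (n+1) + Nat.fib (n+1+1) := Nat.fib_add_two
    have e1 : Nat.fib (n+1+1) = Nat.fib (n+2) := rfl
    have h3 : 0 < Nat.fib (n+2) := Nat.fib_pos.mpr (by omega)
    omega

theorem le_D_const (n : ℕ) (Y Z : Fin 3) (h : Y ≠ Z) :
    Nat.fib (n+2) - 1 ≤ D n (fun _ => Y) Z :=
  le_D_of_const n (fun _ => Y) Y Z (fun _ => rfl) h


theorem D_tau_ne (n : ℕ) (τ : Fin (n+2) → Fin 3) (W Z : Fin 3)
    (h1 : τ (Fin.last (n+1)) = W) (h2 : τ ((Fin.last n).castSucc) = W)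
    (hWZ : W ≠ Z) :
    Nat.fib (n+3) ≤ D (n+2) τ Z := by
  rw [D_succ, if_neg (by rw [h1]; exact hWZ)]
  have hinf : Nat.fib (n+1) ≤ (Finset.univ.filter (fun y => y ≠ τ (Fin.last (n+1)))).inf'
      (filter_ne_nonempty _) (fun Y => D (n+1) (fun i => τ i.castSucc) Y) := by
    apply Finset.le_inf'
    intro y hy
    have hy' : y ≠ W := by
      simpa [h1] using (Finset.mem_filter.mp hy).2
    rw [D_succ, if_neg (by show τ ((Fin.last n).castSucc) ≠ y; rw [h2]; exact Ne.symm hy')]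
    exact Nat.le_add_right _ _
  have h3 : Nat.fib (n+3) = Nat.fib (n+1) + Nat.fib (n+2) := Nat.fib_add_two
  have e1 : Nat.fib (n+1+1) = Nat.fib (n+2) := rfl
  omega

theorem D_tau_eq (n : ℕ) (τ : Fin (n+2) → Fin 3) (Y Z : Fin 3)
    (h1 : τ (Fin.last (n+1)) = Z) (h2 : τ ((Fin.last n).castSucc) = Z)
    (hlow : ∀ i : Fin (n+2), (i : ℕ) < n → τ i = Y) (hYZ : Y ≠ Z) :
    Nat.fib (n+2) - 1 ≤ D (n+2) τ Z := by
  rw [D_succ, if_pos h1]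
  rw [D_succ, if_pos (by show τ ((Fin.last n).castSucc) = Z; exact h2)]
  apply le_D_of_const n _ Y Z _ hYZ
  intro i
  show τ i.castSucc.castSucc = Y
  exact hlow _ (by simp)

theorem fmove_top {n k : ℕ} {s s' : Fin (n+1) → Fin 3} (h : FibMove (n+1) k s s')
    (hk : k ≤ n) : s' (Fin.last n) = s (Fin.last n) := by
  obtain ⟨-, -, X, Y, Z, -, -, -, -, -, -, -, hE⟩ := h
  exact hE (Fin.last n) (by simp; omega) (by simp; omega)

theorem fmove_restrict {n k : ℕ} {s s' : Fin (n+1) → Fin 3} (h : FibMove (n+1) k s s')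
    (hk : k ≤ n) :
    FibMove n k (fun i => s i.castSucc) (fun i => s' i.castSucc) := by
  obtain ⟨h1, -, X, Y, Z, hXY, hYZ, hXZ, hA, hB, hC, hD, hE⟩ := h
  exact ⟨h1, hk, X, Y, Z, hXY, hYZ, hXZ,
    fun i hi => hA i.castSucc (by simpa using hi),
    fun i hi => hB i.castSucc (by simpa using hi),
    fun i hi => hC i.castSucc (by simpa using hi),
    fun i hi => hD i.castSucc (by simpa using hi),
    fun i ha hb => hE i.castSucc (by simpa using ha) (by simpa using hb)⟩

theorem top_const {n t : ℕ} {s : ℕ → Fin (n+1) → Fin 3}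
    (h : ∀ j < t, ∃ k, k ≤ n ∧ FibMove (n+1) k (s j) (s (j+1))) :
    ∀ j ≤ t, s j (Fin.last n) = s 0 (Fin.last n) := by
  intro j
  induction j with
  | zero => intro _; rfl
  | succ j IH =>
    intro hj
    obtain ⟨k, hk, hmv⟩ := h j (by omega)
    rw [fmove_top hmv hk, IH (by omega)]


theorem main_lb : ∀ (m n : ℕ) (s : ℕ → (Fin n → Fin 3)) (Z : Fin 3),
    (∀ i < m, ∃ k, FibMove n k (s i) (s (i+1))) →
    s m = (fun _ => Z) →
    D n (s 0) Z ≤ m := by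
  intro m
  induction m using Nat.strong_induction_on with
  | _ m IHm =>
  intro n
  induction n with
  | zero => intro s Z _ _; simp [D]
  | succ n IHn =>
    intro s Z hmov hend
    classical
    by_cases hex : ∃ t, t < m ∧ FibMove (n+1) (n+1) (s t) (s (t+1))
    case neg =>
      have hall : ∀ j < m, ∃ k, k ≤ n ∧ FibMove (n+1) k (s j) (s (j+1)) := by
        intro j hj
        obtain ⟨k, hk⟩ := hmov j hj
        refine ⟨k, ?_, hk⟩
        have h2 := hk.2.1
        by_contra hc
        have : k = n+1 := by omega
        exact hex ⟨j, hj, this ▸ hk⟩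
      by_cases hZ : s 0 (Fin.last n) = Z
      · have hres : ∀ i < m, ∃ k, FibMove n k
            ((fun j i' => s j i'.castSucc) i) ((fun j i' => s j i'.castSucc) (i+1)) := by
          intro j hj
          obtain ⟨k, hk, hmv⟩ := hall j hj
          exact ⟨k, fmove_restrict hmv hk⟩
        have hend' : (fun j (i' : Fin n) => s j i'.castSucc) m = (fun _ => Z) := by
          funext i'; show s m i'.castSucc = Z; rw [hend]
        have := IHn (fun j i' => s j i'.castSucc) Z hres hend'
        rw [D_succ, if_pos hZ]
        exact this
      · exfalso
        have := top_const hall m le_rfl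
        rw [hend] at this
        exact hZ this.symm
    case pos =>
      obtain ⟨t, htm, htmv, htmin⟩ : ∃ t, t < m ∧ FibMove (n+1) (n+1) (s t) (s (t+1)) ∧
          ∀ j, j < t → ¬ FibMove (n+1) (n+1) (s j) (s (j+1)) :=
        ⟨Nat.find hex, (Nat.find_spec hex).1, (Nat.find_spec hex).2,
          fun j hj h' => Nat.find_min hex hj ⟨by have := (Nat.find_spec hex).1; omega, h'⟩⟩
      have hpremoves : ∀ j < t, ∃ k, k ≤ n ∧ FibMove (n+1) k (s j) (s (j+1)) := by
        intro j hj
        obtain ⟨k, hk⟩ := hmov j (by omega)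
        refine ⟨k, ?_, hk⟩
        have h2 := hk.2.1
        by_contra hc
        have : k = n+1 := by omega
        exact htmin j hj (this ▸ hk)
      have htc := top_const hpremoves
      obtain ⟨-, -, X, Y, W, hXY, hYW, hXW, hX, hXne, hYs, hWs, hkeep⟩ := htmv
      have hstX : s t (Fin.last n) = X := hX (Fin.last n) (by simp)
      have hst0 : s 0 (Fin.last n) = X := by rw [← hstX]; exact (htc t le_rfl).symm
      -- suffix sequence facts (valid for any n)
      have hsufmv : ∀ j < m - t - 1, ∃ k,
          FibMove (n+1) k ((fun l => s (t+1+l)) j) ((fun l => s (t+1+l)) (j+1)) := by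
        intro j hj
        obtain ⟨k, hk⟩ := hmov (t+1+j) (by omega)
        exact ⟨k, hk⟩
      have hsufend : (fun l => s (t+1+l)) (m - t - 1) = (fun _ : Fin (n+1) => Z) := by
        show s (t+1+(m-t-1)) = _
        rw [show t+1+(m-t-1) = m by omega, hend]
      have hsuffix : D (n+1) (s (t+1)) Z ≤ m - t - 1 := by
        have := IHm (m - t - 1) (by omega) (n+1) (fun l => s (t+1+l)) Z hsufmv hsufend
        simpa using this
      match n, s, Z, hmov, hend, htm, htmin, hpremoves, htc, hXY, hYW, hXW, hX, hXne, hYs, hWs,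
          hkeep, hstX, hst0, hsuffix with
      | 0, s, Z, hmov, hend, htm, htmin, hpremoves, htc, hXY, hYW, hXW, hX, hXne, hYs, hWs,
          hkeep, hstX, hst0, hsuffix => ?_
      | n'+1, s, Z, hmov, hend, htm, htmin, hpremoves, htc, hXY, hYW, hXW, hX, hXne, hYs, hWs,
          hkeep, hstX, hst0, hsuffix => ?_
      · -- one disk
        by_cases h0 : s 0 (Fin.last 0) = Z
        · rw [D_succ, if_pos h0]
          simp [D]
        · rw [D_succ, if_neg h0]
          obtain ⟨y, hy⟩ := fin3_exists_ne (s 0 (Fin.last 0))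
          have hm2 : y ∈ Finset.univ.filter (fun y' => y' ≠ s 0 (Fin.last 0)) :=
            Finset.mem_filter.mpr ⟨Finset.mem_univ _, hy⟩
          have hinf : (Finset.univ.filter (fun y' => y' ≠ s 0 (Fin.last 0))).inf'
              (filter_ne_nonempty _) (fun Y => D 0 (fun i => s 0 i.castSucc) Y) ≤ 0 :=
            Finset.inf'_le _ hm2
          have hf1 : Nat.fib (0+1) = 1 := rfl
          omega
      · -- at least two disks
        have hlowY : ∀ i : Fin (n'+2), (i : ℕ) < n'+1 → s t i = Y := fun i hi => hYs i (by omega)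
        have hs1top : s (t+1) (Fin.last (n'+1)) = W := hWs _ (Or.inl (by simp))
        have hs1sec : s (t+1) ((Fin.last n').castSucc) = W := hWs _ (Or.inr (by simp))
        have hprefix : D (n'+1) (fun i => s 0 i.castSucc) Y ≤ t := by
          apply IHm t htm (n'+1) (fun j i => s j i.castSucc) Y
          · intro j hj
            obtain ⟨k, hk, hmv⟩ := hpremoves j hj
            exact ⟨k, fmove_restrict hmv hk⟩
          · funext i
            show s t i.castSucc = Y
            exact hlowY i.castSucc (by simp; omega)
        have eD : D (n'+1+1) (s (t+1)) Z = D (n'+2) (s (t+1)) Z := rfl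
        have hDtau1 : Nat.fib (n'+2) - 1 ≤ D (n'+2) (s (t+1)) Z := by
          by_cases hWZ : W = Z
          · exact D_tau_eq n' (s (t+1)) Y Z (hWZ ▸ hs1top) (hWZ ▸ hs1sec)
              (fun i hi => by rw [hkeep i (by omega) (by omega)]; exact hlowY i (by omega))
              (hWZ ▸ hYW)
          · have := D_tau_ne n' (s (t+1)) W Z hs1top hs1sec hWZ
            have e : Nat.fib (n'+3) = Nat.fib (n'+1) + Nat.fib (n'+2) := Nat.fib_add_two
            omega
        have e1 : Nat.fib (n'+1+1) = Nat.fib (n'+2) := rfl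
        have hfpos : 0 < Nat.fib (n'+2) := Nat.fib_pos.mpr (by omega)
        by_cases hXZ : X = Z
        · have hWZ : W ≠ Z := fun hc => hXW (hXZ.trans hc.symm)
          have hbig := D_tau_ne n' (s (t+1)) W Z hs1top hs1sec hWZ
          have hDle := D_le (n'+1) (fun i => s 0 i.castSucc) Z
          rw [D_succ, if_pos (by rw [hst0, hXZ])]
          have e2 : Nat.fib (n'+3) = Nat.fib (n'+1) + Nat.fib (n'+2) := Nat.fib_add_two
          have e3 : Nat.fib (n'+1+2) = Nat.fib (n'+3) := rfl
          omega
        · have hne : s 0 (Fin.last (n'+1)) ≠ Z := by rw [hst0]; exact hXZ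
          rw [D_succ, if_neg hne]
          have hYmem : Y ∈ Finset.univ.filter (fun y => y ≠ s 0 (Fin.last (n'+1))) :=
            Finset.mem_filter.mpr ⟨Finset.mem_univ _, by rw [hst0]; exact Ne.symm hXY⟩
          have hinf : (Finset.univ.filter (fun y => y ≠ s 0 (Fin.last (n'+1)))).inf'
              (filter_ne_nonempty _) (fun y => D (n'+1) (fun i => s 0 i.castSucc) y)
              ≤ D (n'+1) (fun i => s 0 i.castSucc) Y := Finset.inf'_le _ hYmem
          omega

end HanoiFibAux

open HanoiFibAux

/-- For `n ≥ 2`, the optimal solution `s 0, …, s (F (n+2) - 1)` of the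
Tower of Hanoi-Fibonacci with `n` disks satisfies: `s (F (n+1) - 1)` is the state with
disk `n` on peg `A` and disks `1,…,n-1` on peg `B`, and `s (F (n+1))` is the state with
disks `1,…,n-2` on peg `B` and disks `n-1, n` on peg `C`; in particular the `F (n+1)`-th
move is the unique `n`-Fibonacci move of the solution. -/
theorem hanoiFibonacci_middle_states (n : ℕ) (hn : 2 ≤ n)
    (s : ℕ → (Fin n → Fin 3)) (hs : IsSolution n (Nat.fib (n + 2) - 1) s) :
    (s (Nat.fib (n + 1) - 1) =
      fun i : Fin n => if (i : ℕ) + 1 = n then (0 : Fin 3) else 1) ∧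
    (s (Nat.fib (n + 1)) =
      fun i : Fin n => if (i : ℕ) + 1 = n ∨ (i : ℕ) + 2 = n then (2 : Fin 3) else 1) ∧
    FibMove n n (s (Nat.fib (n + 1) - 1)) (s (Nat.fib (n + 1))) ∧
    ∀ j < Nat.fib (n + 2) - 1, FibMove n n (s j) (s (j + 1)) → j = Nat.fib (n + 1) - 1 := by
  obtain ⟨p, rfl⟩ : ∃ p, n = p + 2 := ⟨n - 2, by omega⟩
  obtain ⟨h0, hM, hmv⟩ := hs
  classical
  have f1 : Nat.fib (p+2+2) = Nat.fib (p+2) + Nat.fib (p+2+1) := Nat.fib_add_two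
  have e3 : Nat.fib (p+3) = Nat.fib (p+2+1) := rfl
  have fpos2 : 0 < Nat.fib (p+2) := Nat.fib_pos.mpr (by omega)
  have fpos3 : 0 < Nat.fib (p+2+1) := Nat.fib_pos.mpr (by omega)
  have fmono : Nat.fib (p+2) ≤ Nat.fib (p+2+1) := Nat.fib_le_fib_succ
  have hex : ∃ t, t < Nat.fib (p+2+2) - 1 ∧ FibMove (p+2) (p+2) (s t) (s (t+1)) := by
    by_contra hc
    push_neg at hc
    have hall : ∀ j < Nat.fib (p+2+2) - 1, ∃ k, k ≤ p+1 ∧ FibMove (p+2) k (s j) (s (j+1)) := by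
      intro j hj
      obtain ⟨k, hk⟩ := hmv j hj
      refine ⟨k, ?_, hk⟩
      have h2 := hk.2.1
      by_contra hc2
      have : k = p+2 := by omega
      exact hc j hj (this ▸ hk)
    have hcc := top_const hall _ le_rfl
    rw [hM, h0] at hcc
    have : (2 : Fin 3) = 0 := hcc
    exact absurd this (by decide)
  obtain ⟨t, htm, htmv, htmin, htleast⟩ : ∃ t, (t < Nat.fib (p+2+2) - 1) ∧
      FibMove (p+2) (p+2) (s t) (s (t+1)) ∧
      (∀ j, j < t → ¬ FibMove (p+2) (p+2) (s j) (s (j+1))) ∧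
      (∀ j, j < Nat.fib (p+2+2) - 1 → FibMove (p+2) (p+2) (s j) (s (j+1)) → t ≤ j) :=
    ⟨Nat.find hex, (Nat.find_spec hex).1, (Nat.find_spec hex).2,
      fun j hj h' => Nat.find_min hex hj ⟨by have := (Nat.find_spec hex).1; omega, h'⟩,
      fun j hj h' => Nat.find_min' hex ⟨hj, h'⟩⟩
  have hpremoves : ∀ j < t, ∃ k, k ≤ p+1 ∧ FibMove (p+2) k (s j) (s (j+1)) := by
    intro j hj
    obtain ⟨k, hk⟩ := hmv j (by omega)
    refine ⟨k, ?_, hk⟩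
    have h2 := hk.2.1
    by_contra hc2
    have : k = p+2 := by omega
    exact htmin j hj (this ▸ hk)
  have htc := top_const hpremoves
  have htmv3 := htmv
  obtain ⟨-, -, X, Y, W, hXY, hYW, hXW, hX, hXne, hYs, hWs, hkeep⟩ := htmv
  have hstX : s t (Fin.last (p+1)) = X := hX (Fin.last (p+1)) (by simp)
  have hX0 : X = 0 := by
    have h1 : s 0 (Fin.last (p+1)) = 0 := by rw [h0]
    rw [← hstX, htc t le_rfl, h1]
  have hlowY : ∀ i : Fin (p+2), (i : ℕ) < p+1 → s t i = Y := fun i hi => hYs i (by omega)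
  have hs1top : s (t+1) (Fin.last (p+1)) = W := hWs _ (Or.inl (by simp))
  have hs1sec : s (t+1) ((Fin.last p).castSucc) = W := hWs _ (Or.inr (by simp))
  have hprefix : Nat.fib (p+2+1) - 1 ≤ t := by
    have h1 : D (p+1) (fun i => s 0 i.castSucc) Y ≤ t := by
      apply main_lb t (p+1) (fun j i => s j i.castSucc) Y
      · intro j hj
        obtain ⟨k, hk, hmv'⟩ := hpremoves j hj
        exact ⟨k, fmove_restrict hmv' hk⟩
      · funext i
        show s t i.castSucc = Y
        exact hlowY i.castSucc (by simp; omega)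
    have h2 : Nat.fib (p+1+2) - 1 ≤ D (p+1) (fun i => s 0 i.castSucc) Y := by
      have hcst : (fun i : Fin (p+1) => s 0 i.castSucc) = (fun _ => (0 : Fin 3)) := by
        funext i; rw [h0]
      rw [hcst]
      exact le_D_const (p+1) 0 Y (by rw [← hX0]; exact hXY)
    have e4 : Nat.fib (p+1+2) = Nat.fib (p+2+1) := rfl
    omega
  have hsuffix : D (p+2) (s (t+1)) 2 ≤ (Nat.fib (p+2+2) - 1) - t - 1 := by
    have h := main_lb ((Nat.fib (p+2+2) - 1) - t - 1) (p+2) (fun l => s (t+1+l)) 2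
      (by intro j hj
          obtain ⟨k, hk⟩ := hmv (t+1+j) (by omega)
          exact ⟨k, hk⟩)
      (by show s (t+1+((Nat.fib (p+2+2) - 1) - t - 1)) = _
          rw [show t+1+((Nat.fib (p+2+2) - 1) - t - 1) = Nat.fib (p+2+2) - 1 by omega, hM])
    simpa using h
  have hW2 : W = 2 := by
    by_contra hWne
    have hbig := D_tau_ne p (s (t+1)) W 2 hs1top hs1sec hWne
    omega
  have hY1 : Y = 1 := fin3_third Y (by rw [← hX0]; exact Ne.symm hXY) (by rw [← hW2]; exact hYW)
  have hDeq : Nat.fib (p+2) - 1 ≤ D (p+2) (s (t+1)) 2 :=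
    D_tau_eq p (s (t+1)) Y 2 (hW2 ▸ hs1top) (hW2 ▸ hs1sec)
      (fun i hi => by rw [hkeep i (by omega) (by omega)]; exact hlowY i (by omega))
      (by rw [hY1]; decide)
  have hteq : t = Nat.fib (p+2+1) - 1 := by omega
  have ht1 : Nat.fib (p+2+1) = t + 1 := by omega
  refine ⟨?_, ?_, ?_, ?_⟩
  · rw [← hteq]
    funext i
    by_cases hi : (i : ℕ) + 1 = p+2
    · rw [if_pos hi]
      have hil : i = Fin.last (p+1) := by
        apply Fin.ext
        simp only [Fin.val_last]
        omega
      rw [hil, hstX, hX0]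
    · rw [if_neg hi]
      have hi2 := i.isLt
      rw [hlowY i (by omega), hY1]
  · rw [ht1]
    funext i
    by_cases hi : (i : ℕ) + 1 = p+2 ∨ (i : ℕ) + 2 = p+2
    · rw [if_pos hi, hWs i hi, hW2]
    · rw [if_neg hi]
      obtain ⟨hi1, hi2⟩ := not_or.mp hi
      have hi3 := i.isLt
      rw [hkeep i hi1 hi2, hlowY i (by omega), hY1]
  · rw [← hteq, ht1]
    exact htmv3
  · intro j hj hjmv
    have htj : t ≤ j := htleast j hj hjmv
    rcases eq_or_lt_of_le htj with heq | hlt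
    · omega
    · exfalso
      obtain ⟨-, -, X', Y', W', hXY', hYW', hXW', hX', hXne', hYs', hWs', hkeep'⟩ := hjmv
      have h1' : s (j+1) (Fin.last (p+1)) = W' := hWs' _ (Or.inl (by simp))
      have h2' : s (j+1) ((Fin.last p).castSucc) = W' := hWs' _ (Or.inr (by simp))
      have hsuf2 : D (p+2) (s (j+1)) 2 ≤ (Nat.fib (p+2+2) - 1) - j - 1 := by
        have h := main_lb ((Nat.fib (p+2+2) - 1) - j - 1) (p+2) (fun l => s (j+1+l)) 2
          (by intro l hl
              obtain ⟨k, hk⟩ := hmv (j+1+l) (by omega)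
              exact ⟨k, hk⟩)
          (by show s (j+1+((Nat.fib (p+2+2) - 1) - j - 1)) = _
              rw [show j+1+((Nat.fib (p+2+2) - 1) - j - 1) = Nat.fib (p+2+2) - 1 by omega, hM])
        simpa using h
      have hlow2 : Nat.fib (p+2) - 1 ≤ D (p+2) (s (j+1)) 2 := by
        by_cases hW'2 : W' = 2
        · exact D_tau_eq p (s (j+1)) Y' 2 (hW'2 ▸ h1') (hW'2 ▸ h2')
            (fun i hi => by rw [hkeep' i (by omega) (by omega)]; exact hYs' i (by omega))
            (by rw [← hW'2]; exact hYW')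
        · have := D_tau_ne p (s (j+1)) W' 2 h1' h2' hW'2
          omega
      omega
end

section
/- Let 0 < k ≤ n be integers. In the optimal solution of the Tower of Hanoi-Fibonacci with n disks, the number of k-Fibonacci moves equals F_{n+1−k}. -/
namespace HanoiFibAux

def third (a b : Fin 3) : Fin 3 :=
  if a ≠ 0 ∧ b ≠ 0 then 0 else if a ≠ 1 ∧ b ≠ 1 then 1 else 2

lemma third_ne_left : ∀ {a b : Fin 3}, a ≠ b → third a b ≠ a := by decide
lemma third_ne_right : ∀ {a b : Fin 3}, a ≠ b → third a b ≠ b := by decide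
lemma third_inv_right : ∀ {a b : Fin 3}, a ≠ b → third a (third a b) = b := by decide
lemma third_inv_left : ∀ {a b : Fin 3}, a ≠ b → third (third a b) b = a := by decide
lemma third_inv_left' : ∀ {a b : Fin 3}, a ≠ b → third (third a b) a = b := by decide
lemma third_eq : ∀ {X Y Z : Fin 3}, X ≠ Y → Y ≠ Z → X ≠ Z → Z = third X Y := by decide
lemma third_cases : ∀ {a b : Fin 3}, a ≠ b → ∀ c, c = a ∨ c = b ∨ c = third a b := by decide

def Psi (f : ℕ → Fin 3) (b : ℕ) : ℕ → Fin 3 → ℕ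
  | 0, _ => 0
  | 1, c => if f b = c then 0 else 1
  | (j+2), c =>
    if f (b + j + 1) = c then Psi f b (j+1) c
    else min (Psi f b (j+1) (third (f (b + j + 1)) c) + Nat.fib j)
             (Psi f b (j+1) c + Nat.fib (j+1))

lemma Psi_zero (f : ℕ → Fin 3) (b : ℕ) (c : Fin 3) : Psi f b 0 c = 0 := rfl
lemma Psi_one (f : ℕ → Fin 3) (b : ℕ) (c : Fin 3) :
    Psi f b 1 c = if f b = c then 0 else 1 := rfl
lemma Psi_succ2 (f : ℕ → Fin 3) (b j : ℕ) (c : Fin 3) :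
    Psi f b (j+2) c =
      if f (b + j + 1) = c then Psi f b (j+1) c
      else min (Psi f b (j+1) (third (f (b + j + 1)) c) + Nat.fib j)
               (Psi f b (j+1) c + Nat.fib (j+1)) := rfl

lemma psi_const {f : ℕ → Fin 3} {b : ℕ} {Y : Fin 3} :
    ∀ {len : ℕ}, (∀ t, t < len → f (b + t) = Y) → ∀ c,
      Psi f b len c = if Y = c then 0 else Nat.fib len := by
  intro len
  induction len with
  | zero => intro _ c; simp [Psi_zero]
  | succ m ih =>
    intro h c
    rcases m with _ | m'
    · have hb : f b = Y := by have := h 0 (by omega); simpa using this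
      rw [Psi_one, hb]
      by_cases hYc : Y = c <;> simp [hYc]
    · have htop : f (b + m' + 1) = Y := by
        have := h (m'+1) (by omega)
        rwa [← Nat.add_assoc] at this
      have ih' := ih (fun t ht => h t (by omega))
      rw [Psi_succ2 f b m' c, htop]
      by_cases hYc : Y = c
      · rw [if_pos hYc, ih' c, if_pos hYc, if_pos hYc]
      · rw [if_neg hYc, ih' c, if_neg hYc, ih' (third Y c),
          if_neg (fun he => third_ne_left hYc he.symm), if_neg hYc]
        have h1 : Nat.fib (m' + 2) = Nat.fib m' + Nat.fib (m'+1) := Nat.fib_add_two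
        have h2 : Nat.fib m' ≤ Nat.fib (m'+1) := Nat.fib_le_fib_succ
        have h3 : Nat.fib (m'+1+1) = Nat.fib (m'+2) := congrArg Nat.fib (by omega)
        omega

lemma psi_ext {f f' : ℕ → Fin 3} {b : ℕ} :
    ∀ {len : ℕ}, (∀ t, t < len → f (b + t) = f' (b + t)) → ∀ c,
      Psi f b len c = Psi f' b len c := by
  intro len
  induction len with
  | zero => intro _ c; simp [Psi_zero]
  | succ m ih =>
    intro h c
    rcases m with _ | m'
    · have hb : f b = f' b := by have := h 0 (by omega); simpa using this
      rw [Psi_one, Psi_one, hb]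
    · have htop : f (b + m' + 1) = f' (b + m' + 1) := by
        have := h (m'+1) (by omega)
        rwa [← Nat.add_assoc] at this
      have ih' := ih (fun t ht => h t (by omega))
      rw [Psi_succ2 f b m' c, Psi_succ2 f' b m' c, htop, ih' c,
        ih' (third (f' (b + m' + 1)) c)]

lemma psi_bottom {f f' : ℕ → Fin 3} {b : ℕ} (h : ∀ t, b < t → f t = f' t) :
    ∀ len c, Psi f b len c ≤ Psi f' b len c + 1 := by
  intro len
  induction len with
  | zero => intro c; simp [Psi_zero]
  | succ m ih =>
    intro c
    rcases m with _ | m'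
    · by_cases h1 : f b = c <;> by_cases h2 : f' b = c <;> simp [Psi_one, h1, h2]
    · have htop : f (b + m' + 1) = f' (b + m' + 1) := h _ (by omega)
      rw [Psi_succ2 f b m' c, Psi_succ2 f' b m' c, htop]
      by_cases hc : f' (b + m' + 1) = c
      · rw [if_pos hc, if_pos hc]; exact ih c
      · rw [if_neg hc, if_neg hc]
        have h1 := ih c
        have h2 := ih (third (f' (b + m' + 1)) c)
        omega

lemma psi_top {f : ℕ → Fin 3} {b d : ℕ} {X Y : Fin 3} (hXY : X ≠ Y)
    (hbelow : ∀ t, t < d + 1 → f (b + t) = Y) (htop : f (b + d + 1) = X) :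
    ∀ c, Psi f b (d+2) c = if c = third X Y then Nat.fib d else Nat.fib (d+1) := by
  intro c
  have hsub : ∀ c', Psi f b (d+1) c' = if Y = c' then 0 else Nat.fib (d+1) :=
    psi_const hbelow
  have hfib1 : Nat.fib (d + 2) = Nat.fib d + Nat.fib (d+1) := Nat.fib_add_two
  have hfib2 : Nat.fib d ≤ Nat.fib (d+1) := Nat.fib_le_fib_succ
  have hZX : third X Y ≠ X := third_ne_left hXY
  have hZY : third X Y ≠ Y := third_ne_right hXY
  rcases third_cases hXY c with hc | hc | hc <;> rw [hc]
  · rw [Psi_succ2 f b d X, htop, if_pos rfl, hsub X, if_neg (Ne.symm hXY),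
      if_neg (fun he => hZX he.symm)]
  · rw [Psi_succ2 f b d Y, htop, if_neg hXY, hsub (third X Y),
      if_neg (fun he => hZY he.symm), hsub Y, if_pos rfl,
      if_neg (fun he => hZY he.symm)]
    omega
  · rw [Psi_succ2 f b d (third X Y), htop,
      if_neg (fun he => hZX he.symm), third_inv_right hXY, hsub Y, if_pos rfl,
      hsub (third X Y), if_neg (fun he => hZY he.symm), if_pos rfl]
    omega

lemma psi_free {f f' : ℕ → Fin 3} {b d : ℕ} {X Y : Fin 3} (hXY : X ≠ Y)
    (hbelow : ∀ t, t < d + 1 → f (b + t) = Y)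
    (htop : f (b + d + 1) = X)
    (h1 : f' (b + d + 1) = third X Y)
    (h2 : f' (b + d) = third X Y)
    (h3 : ∀ t, t ≠ b + d + 1 → t ≠ b + d → f' t = f t) :
    ∀ e c, Psi f b (d + 2 + e) c ≤ Psi f' b (d + 2 + e) c := by
  have hZX : third X Y ≠ X := third_ne_left hXY
  have hZY : third X Y ≠ Y := third_ne_right hXY
  intro e
  induction e with
  | zero =>
    intro c
    have hg : d + 2 + 0 = d + 2 := rfl
    rw [hg]
    have hL := psi_top hXY hbelow htop
    rcases d with _ | d'
    · -- d = 0 : window of length 2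
      have hYb : f b = Y := by have := hbelow 0 (by omega); simpa using this
      have h2' : f' b = third X Y := by simpa using h2
      rw [Psi_succ2 f b 0 c, Psi_succ2 f' b 0 c, htop, h1, Psi_one, Psi_one,
        Psi_one, Psi_one, hYb, h2']
      have key : ∀ (X Y c : Fin 3), X ≠ Y →
          (if X = c then (if Y = c then 0 else 1)
           else min ((if Y = third X c then 0 else 1) + Nat.fib 0)
                    ((if Y = c then 0 else 1) + Nat.fib 1)) ≤
          (if third X Y = c then (if third X Y = c then 0 else 1)
           else min ((if third X Y = third (third X Y) c then 0 else 1) + Nat.fib 0)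
                    ((if third X Y = c then 0 else 1) + Nat.fib 1)) := by decide
      exact key X Y c hXY
    · -- d = d' + 1
      have hbelow' : ∀ t, t < d' + 1 → f' (b + t) = Y := by
        intro t ht
        rw [h3 (b + t) (by omega) (by omega)]
        exact hbelow t (by omega)
      have htop' : f' (b + d' + 1) = third X Y := by
        have hbb : b + d' + 1 = b + (d' + 1) := by omega
        rw [hbb]; exact h2
      have hsub' := psi_top hZY hbelow' htop'
      rw [third_inv_left hXY] at hsub'
      have hfibA : Nat.fib (d' + 2) = Nat.fib d' + Nat.fib (d'+1) := Nat.fib_add_two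
      have hfibB : Nat.fib d' ≤ Nat.fib (d'+1) := Nat.fib_le_fib_succ
      have hb2 : d' + 1 + 1 = d' + 2 := rfl
      rcases third_cases hXY c with hc | hc | hc <;> rw [hc]
      · -- c = X
        rw [hL X, if_neg (fun he => hZX he.symm),
          Psi_succ2 f' b (d'+1) X, h1, if_neg hZX, third_inv_left' hXY,
          hb2, hsub' Y, if_neg (Ne.symm hXY), hsub' X, if_pos rfl]
        have hfibC : Nat.fib (d'+1+2) = Nat.fib (d'+1) + Nat.fib (d'+2) := Nat.fib_add_two
        omega
      · -- c = Y
        rw [hL Y, if_neg (fun he => hZY he.symm),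
          Psi_succ2 f' b (d'+1) Y, h1, if_neg hZY, third_inv_left hXY,
          hb2, hsub' X, if_pos rfl, hsub' Y, if_neg (Ne.symm hXY)]
        have hfibC : Nat.fib (d'+1+2) = Nat.fib (d'+1) + Nat.fib (d'+2) := Nat.fib_add_two
        omega
      · -- c = third X Y
        rw [hL (third X Y), if_pos rfl,
          Psi_succ2 f' b (d'+1) (third X Y), h1, if_pos rfl,
          hb2, hsub' (third X Y), if_neg hZX]
  | succ e ih =>
    intro c
    have hlen : d + 2 + (e + 1) = (d + e + 1) + 2 := by omega
    rw [hlen]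
    have hf : f' (b + (d + e + 1) + 1) = f (b + (d + e + 1) + 1) :=
      h3 _ (by omega) (by omega)
    rw [Psi_succ2 f b (d+e+1) c, Psi_succ2 f' b (d+e+1) c, hf]
    have hlen2 : d + e + 1 + 1 = d + 2 + e := by omega
    by_cases hc : f (b + (d + e + 1) + 1) = c
    · rw [if_pos hc, if_pos hc, hlen2]; exact ih c
    · rw [if_neg hc, if_neg hc, hlen2]
      have i1 := ih c
      have i2 := ih (third (f (b + (d + e + 1) + 1)) c)
      omega

def emb (n : ℕ) (s : Fin n → Fin 3) : ℕ → Fin 3 :=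
  fun t => if h : t < n then s ⟨t, h⟩ else 0

lemma move_unique {n a b : ℕ} {s s' : Fin n → Fin 3}
    (ha : FibMove n a s s') (hb : FibMove n b s s') : a = b := by
  obtain ⟨ha1, han, Xa, Ya, Za, hXYa, hYZa, hXZa, haX, -, -, haZ, haK⟩ := ha
  obtain ⟨hb1, hbn, Xb, Yb, Zb, hXYb, hYZb, hXZb, hbX, -, -, hbZ, hbK⟩ := hb
  have key : ∀ (c : ℕ), 1 ≤ c → c ≤ n → ∀ (X Z : Fin 3), X ≠ Z →
      (∀ i : Fin n, (i : ℕ) + 1 = c → s i = X) →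
      (∀ i : Fin n, ((i : ℕ) + 1 = c ∨ (i : ℕ) + 2 = c) → s' i = Z) →
      ∀ (d : ℕ), (∀ i : Fin n, (i : ℕ) + 1 ≠ d → (i : ℕ) + 2 ≠ d → s' i = s i) →
      c = d ∨ c + 1 = d := by
    intro c hc1 hcn X Z hXZ hX hZ d hK
    by_contra hcon
    push_neg at hcon
    have hic : c - 1 < n := by omega
    have h1 : s ⟨c-1, hic⟩ = X := hX _ (by simp; omega)
    have h2 : s' ⟨c-1, hic⟩ = Z := hZ _ (Or.inl (by simp; omega))
    have h3 : s' ⟨c-1, hic⟩ = s ⟨c-1, hic⟩ := hK _ (by simp; omega) (by simp; omega)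
    rw [h1, h2] at h3
    exact hXZ h3.symm
  have k1 := key a ha1 han Xa Za hXZa haX haZ b hbK
  have k2 := key b hb1 hbn Xb Zb hXZb hbX hbZ a haK
  omega

lemma step_bound {n k j : ℕ} (hk1 : 1 ≤ k) (hkn : k ≤ n) {s s' : Fin n → Fin 3}
    (h : FibMove n j s s') :
    Psi (emb n s) (k-1) (n+1-k) 2 ≤ Psi (emb n s') (k-1) (n+1-k) 2 +
      (if j = k then 1 else 0) := by
  obtain ⟨hj1, hjn, X, Y, Z, hXY, hYZ, hXZ, hmX, hmnX, hmY, hmZ, hmK⟩ := h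
  rcases lt_trichotomy j k with hlt | heq | hgt
  · -- j < k : nothing in window moves
    have heqp : Psi (emb n s) (k-1) (n+1-k) 2 = Psi (emb n s') (k-1) (n+1-k) 2 := by
      apply psi_ext
      intro t ht
      unfold emb
      by_cases hu : (k-1) + t < n
      · rw [dif_pos hu, dif_pos hu]
        exact (hmK ⟨(k-1)+t, hu⟩ (by simp; omega) (by simp; omega)).symm
      · rw [dif_neg hu, dif_neg hu]
    rw [heqp]; exact Nat.le_add_right _ _
  · subst heq
    rw [if_pos rfl]
    apply psi_bottom
    intro t ht
    unfold emb
    by_cases hu : t < n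
    · rw [dif_pos hu, dif_pos hu]
      exact (hmK ⟨t, hu⟩ (by simp; omega) (by simp; omega)).symm
    · rw [dif_neg hu, dif_neg hu]
  · -- j > k
    obtain ⟨d, hd⟩ : ∃ d, j = k + d + 1 := ⟨j - k - 1, by omega⟩
    obtain ⟨e, he⟩ : ∃ e, n + 1 - k = d + 2 + e := ⟨n - j, by omega⟩
    rw [he]
    have hZ3 : Z = third X Y := third_eq hXY hYZ hXZ
    have main : Psi (emb n s) (k-1) (d+2+e) 2 ≤ Psi (emb n s') (k-1) (d+2+e) 2 := by
      apply psi_free (X := X) (Y := Y) hXY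
      · intro t ht
        have hu : (k-1) + t < n := by omega
        unfold emb
        rw [dif_pos hu]
        exact hmY ⟨(k-1)+t, hu⟩ (by simp; omega)
      · have hu : (k-1) + d + 1 < n := by omega
        unfold emb
        rw [dif_pos hu]
        exact hmX ⟨(k-1)+d+1, hu⟩ (by simp; omega)
      · have hu : (k-1) + d + 1 < n := by omega
        unfold emb
        rw [dif_pos hu, ← hZ3]
        exact hmZ ⟨(k-1)+d+1, hu⟩ (Or.inl (by simp; omega))
      · have hu : (k-1) + d < n := by omega
        unfold emb
        rw [dif_pos hu, ← hZ3]
        exact hmZ ⟨(k-1)+d, hu⟩ (Or.inr (by simp; omega))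
      · intro t ht1 ht2
        unfold emb
        by_cases hu : t < n
        · rw [dif_pos hu, dif_pos hu]
          exact hmK ⟨t, hu⟩ (by simp; omega) (by simp; omega)
        · rw [dif_neg hu, dif_neg hu]
    exact le_trans main (Nat.le_add_right _ _)

lemma sum_fib_range : ∀ m, (∑ i ∈ Finset.range m, Nat.fib (i+1)) + 1 = Nat.fib (m+2) := by
  intro m
  induction m with
  | zero => simp
  | succ m ih =>
    rw [Finset.sum_range_succ]
    have h := Nat.fib_add_two (n := m+1)
    have e1 : Nat.fib (m+1+1) = Nat.fib (m+2) := congrArg Nat.fib (by omega)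
    have e2 : Nat.fib (m+1+2) = Nat.fib (m+3) := congrArg Nat.fib (by omega)
    omega

end HanoiFibAux

/-- Let `0 < k ≤ n`. In the optimal solution of the Tower of
Hanoi-Fibonacci with `n` disks, the number of `k`-Fibonacci moves equals `F (n+1-k)`. -/
theorem hanoiFibonacci_count_k_moves (n k : ℕ) (hk0 : 0 < k) (hkn : k ≤ n)
    (s : ℕ → (Fin n → Fin 3)) (hs : IsSolution n (Nat.fib (n + 2) - 1) s) :
    Set.ncard {i | i < Nat.fib (n + 2) - 1 ∧ FibMove n k (s i) (s (i + 1))} =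
      Nat.fib (n + 1 - k) := by
  classical
  open HanoiFibAux in
  obtain ⟨h0, hMend, hstep⟩ := hs
  set M := Nat.fib (n + 2) - 1 with hMdef
  set S : ℕ → Finset ℕ := fun j =>
    (Finset.range M).filter (fun i => FibMove n j (s i) (s (i+1))) with hSdef
  -- lower bound for each j
  have lower : ∀ j, 1 ≤ j → j ≤ n → Nat.fib (n+1-j) ≤ (S j).card := by
    intro j hj1 hjn
    have key : ∀ N, N ≤ M → Psi (emb n (s 0)) (j-1) (n+1-j) 2 ≤
        Psi (emb n (s N)) (j-1) (n+1-j) 2 +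
          ∑ i ∈ Finset.range N, (if FibMove n j (s i) (s (i+1)) then 1 else 0) := by
      intro N
      induction N with
      | zero => intro _; simp
      | succ N ih =>
        intro hN
        have hrec := ih (by omega)
        obtain ⟨j', hmv⟩ := hstep N (by omega)
        have h2 := step_bound hj1 hjn hmv
        have h3 : (if j' = j then 1 else 0) ≤
            (if FibMove n j (s N) (s (N+1)) then (1:ℕ) else 0) := by
          by_cases hjj : j' = j
          · subst hjj; simp [hmv]
          · simp [hjj]
        rw [Finset.sum_range_succ]
        omega
    have hstart : Psi (emb n (s 0)) (j-1) (n+1-j) 2 = Nat.fib (n+1-j) := by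
      rw [psi_const (Y := 0) (fun t ht => by simp [emb, h0])]
      simp [show (0 : Fin 3) ≠ 2 by decide]
    have hend : Psi (emb n (s M)) (j-1) (n+1-j) 2 = 0 := by
      rw [psi_const (Y := 2) (fun t ht => by
        have hu : (j-1) + t < n := by omega
        simp [emb, hu, hMend])]
      simp
    have hkey := key M le_rfl
    rw [hstart, hend] at hkey
    calc Nat.fib (n+1-j) ≤ 0 + ∑ i ∈ Finset.range M,
          (if FibMove n j (s i) (s (i+1)) then 1 else 0) := hkey
      _ = (S j).card := by
          rw [Nat.zero_add, hSdef, Finset.card_filter]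
  -- disjointness
  have hdisj : ∀ j1 ∈ Finset.Icc 1 n, ∀ j2 ∈ Finset.Icc 1 n, j1 ≠ j2 →
      Disjoint (S j1) (S j2) := by
    intro j1 _ j2 _ hne
    rw [Finset.disjoint_left]
    intro i hi1 hi2
    rw [hSdef] at hi1 hi2
    simp only [Finset.mem_filter] at hi1 hi2
    exact hne (move_unique hi1.2 hi2.2)
  -- total count bounded by M
  have hsum_le : ∑ j ∈ Finset.Icc 1 n, (S j).card ≤ M := by
    rw [← Finset.card_biUnion hdisj]
    calc ((Finset.Icc 1 n).biUnion S).card ≤ (Finset.range M).card := by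
          apply Finset.card_le_card
          intro i hi
          rw [Finset.mem_biUnion] at hi
          obtain ⟨j, -, hij⟩ := hi
          rw [hSdef] at hij
          exact (Finset.mem_filter.mp hij).1
      _ = M := Finset.card_range M
  -- sum of fibs equals M
  have hfibsum : ∑ j ∈ Finset.Icc 1 n, Nat.fib (n+1-j) = M := by
    have e1 : ∑ j ∈ Finset.Icc 1 n, Nat.fib (n+1-j)
        = ∑ i ∈ Finset.range n, Nat.fib (n - i) := by
      rw [← Finset.Ico_add_one_right_eq_Icc, Finset.sum_Ico_eq_sum_range]
      apply Finset.sum_congr (by congr 1)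
      intro i hi
      congr 1
      omega
    have e2 : ∑ i ∈ Finset.range n, Nat.fib (n - i)
        = ∑ i ∈ Finset.range n, Nat.fib (i+1) := by
      rw [← Finset.sum_range_reflect (fun i => Nat.fib (i+1)) n]
      apply Finset.sum_congr rfl
      intro i hi
      rw [Finset.mem_range] at hi
      congr 1
      omega
    have e3 := sum_fib_range n
    rw [e1, e2, hMdef]
    omega
  -- each is exactly fib
  have hle : ∀ j ∈ Finset.Icc 1 n, Nat.fib (n+1-j) ≤ (S j).card := by
    intro j hj
    rw [Finset.mem_Icc] at hj
    exact lower j hj.1 hj.2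
  have hsums : ∑ j ∈ Finset.Icc 1 n, Nat.fib (n+1-j) = ∑ j ∈ Finset.Icc 1 n, (S j).card := by
    have h1 := Finset.sum_le_sum hle
    omega
  have heach := (Finset.sum_eq_sum_iff_of_le hle).mp hsums
  have hkk := heach k (Finset.mem_Icc.mpr ⟨hk0, hkn⟩)
  have hsetS : {i | i < M ∧ FibMove n k (s i) (s (i + 1))} = ↑(S k) := by
    ext i
    rw [hSdef]
    simp [Finset.mem_filter, Finset.mem_range]
  rw [hsetS, Set.ncard_coe_finset, ← hkk]
end

section
/- For every n ≥ 1 and every 0 ≤ k < F_n, the (k+1)-st letter of μ_n is r if and only if the number of digits 1 in the Zeckendorf expansion of k (the empty expansion when k = 0) has the same parity as n; that is, for n even the letter is r iff that number of 1s is even, and for n odd the letter is r iff it is odd. -/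
set_option synthInstance.maxSize 400 in
instance (n k : ℕ) (s s' : Fin n → Fin 3) : Decidable (FibMove n k s s') := by
  unfold FibMove; infer_instance

/-- The word `μ_n ∈ {l, r}^{F n}` recording the directions of the successive
`1`-Fibonacci moves (moves of disk `1` alone) in a solution `s` of length
`F (n+2) - 1` of the Tower of Hanoi-Fibonacci with `n` disks.  The letter `r`
(coded by `true`) means that disk `1` moves from `A` to `B`, from `B` to `C`
or from `C` to `A` (i.e. its peg increases by `1` modulo `3`); the letter `l`
is coded by `false`. -/
def muWord (n : ℕ) (s : ℕ → (Fin n → Fin 3)) : List Bool :=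
  ((List.range (Nat.fib (n + 2) - 1)).filter
      (fun i => decide (FibMove n 1 (s i) (s (i + 1))))).map
    (fun i => if h : 0 < n then decide (s (i + 1) ⟨0, h⟩ = s i ⟨0, h⟩ + 1) else true)

namespace HanoiFibAux

/-- `a`-move in the ℕ-indexed Hanoi-Fibonacci: disk `a` (0-based) moves, dragging disk `a-1`. -/
def Move (a : ℕ) (t t' : ℕ → Fin 3) : Prop :=
  ∃ X Y Z : Fin 3, X ≠ Y ∧ Y ≠ Z ∧ X ≠ Z ∧ t a = X ∧ (∀ j < a, t j = Y) ∧
    (∀ j, a ≤ j + 1 → j ≤ a → t' j = Z) ∧ (∀ j, j + 1 < a ∨ a < j → t' j = t j)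

lemma Move.ne_top {a : ℕ} {t t' : ℕ → Fin 3} (h : Move a t t') : t' a ≠ t a := by
  obtain ⟨X, Y, Z, hXY, hYZ, hXZ, h1, h2, h3, h4⟩ := h
  rw [h1, h3 a (by omega) (by omega)]
  exact fun hc => hXZ hc.symm

lemma Move.fix {a : ℕ} {t t' : ℕ → Fin 3} (h : Move a t t') {j : ℕ}
    (hj : j + 1 < a ∨ a < j) : t' j = t j := by
  obtain ⟨X, Y, Z, hXY, hYZ, hXZ, h1, h2, h3, h4⟩ := h
  exact h4 j hj

lemma Move.unique {a b : ℕ} {t t' : ℕ → Fin 3} (ha : Move a t t') (hb : Move b t t') :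
    a = b := by
  rcases lt_trichotomy a b with h | h | h
  · exact absurd (ha.fix (Or.inr h)) hb.ne_top
  · exact h
  · exact absurd (hb.fix (Or.inr h)) ha.ne_top

/-- Disks with index `≥ c` are unchanged along a path all of whose moves have index `< c`. -/
lemma stable (s : ℕ → ℕ → Fin 3) (c x : ℕ) :
    ∀ y, x ≤ y →
      (∀ i, x ≤ i → i < y → ∃ a, a < c ∧ Move a (s i) (s (i + 1))) →
      ∀ j, c ≤ j → s y j = s x j := by
  intro y
  induction y with
  | zero => intro hy _ j _; have : x = 0 := by omega
            rw [this]
  | succ y ih =>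
    intro hxy hm j hj
    rcases Nat.lt_or_ge x (y+1) with h | h
    · have hxy' : x ≤ y := by omega
      obtain ⟨a, ha, hmv⟩ := hm y hxy' (by omega)
      have := hmv.fix (j := j) (Or.inr (by omega))
      rw [this]
      exact ih hxy' (fun i h1 h2 => hm i h1 (by omega)) j hj
    · have : x = y + 1 := by omega
      rw [this]


/-- The canonical direction word. -/
def Wn : ℕ → Fin 3 → List Bool
  | 0, _ => []
  | 1, d => [decide (d = 1)]
  | (n+2), d => Wn (n+1) (-d) ++ Wn n (-d)

lemma Wn_length : ∀ (n : ℕ) (d : Fin 3), (Wn n d).length = Nat.fib n := by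
  intro n
  induction n using Nat.twoStepInduction with
  | zero => intro d; rfl
  | one => intro d; rfl
  | more n ih1 ih2 =>
    intro d
    simp only [Wn, List.length_append, ih1, ih2, Nat.fib_add_two]
    omega

open Classical in
/-- The word of directions of the `0`-moves among moves `x, x+1, …, x+m-1`. -/
noncomputable def dirWord (s : ℕ → ℕ → Fin 3) (x : ℕ) : ℕ → List Bool
  | 0 => []
  | (m+1) => dirWord s x m ++
      (if Move 0 (s (x+m)) (s (x+m+1)) then [decide (s (x+m+1) 0 = s (x+m) 0 + 1)] else [])

lemma dirWord_add (s : ℕ → ℕ → Fin 3) (x a : ℕ) :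
    ∀ b, dirWord s x (a + b) = dirWord s x a ++ dirWord s (x + a) b := by
  intro b
  induction b with
  | zero => simp [dirWord]
  | succ b ih =>
    have : a + (b + 1) = (a + b) + 1 := by omega
    rw [this]
    show dirWord s x ((a+b)+1) = _
    rw [dirWord, ih]
    simp only [dirWord, List.append_assoc]
    have e1 : x + (a + b) = x + a + b := by omega
    rw [e1]

lemma dirWord_one_of_not_move0 (s : ℕ → ℕ → Fin 3) (x : ℕ)
    (h : ¬ Move 0 (s x) (s (x + 1))) : dirWord s x 1 = [] := by
  show dirWord s x (0+1) = []
  rw [dirWord]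
  simp [dirWord, h]

lemma dirWord_one_of_move0 (s : ℕ → ℕ → Fin 3) (x : ℕ)
    (h : Move 0 (s x) (s (x + 1))) :
    dirWord s x 1 = [decide (s (x+1) 0 = s x 0 + 1)] := by
  show dirWord s x (0+1) = _
  rw [dirWord]
  simp [dirWord, h]


/-- L1: moving an `n`-tower from `p` to `q` takes at least `fib (n+2) - 1` moves,
and an optimal path has the canonical direction word. -/
def L1 (m : ℕ) : Prop :=
  ∀ (s : ℕ → ℕ → Fin 3) (x n : ℕ) (p q : Fin 3),
    (∀ i, x ≤ i → i < x + m → ∃ a, a < n ∧ Move a (s i) (s (i + 1))) →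
    (∀ j < n, s x j = p) → (∀ j < n, s (x + m) j = q) → p ≠ q →
    Nat.fib (n + 2) - 1 ≤ m ∧
      (m = Nat.fib (n + 2) - 1 → dirWord s x m = Wn n (q - p))

/-- L2: from `<c` on `Y`, disks `c, c+1` on `Z`, parked disks `[c+2, K)` on `q`, to all-`q`. -/
def L2 (m : ℕ) : Prop :=
  ∀ (s : ℕ → ℕ → Fin 3) (x c K : ℕ) (Y Z q : Fin 3),
    c + 2 ≤ K →
    (∀ i, x ≤ i → i < x + m → ∃ a, a < K ∧ Move a (s i) (s (i + 1))) →
    (∀ j < c, s x j = Y) → s x c = Z → s x (c + 1) = Z → Y ≠ Z →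
    (∀ j, c + 2 ≤ j → j < K → s x j = q) →
    (∀ j < K, s (x + m) j = q) →
    (Z = q → Nat.fib (c + 2) - 1 ≤ m ∧
      (m = Nat.fib (c + 2) - 1 →
        ∀ i, x ≤ i → i < x + m → ∃ a, a < c ∧ Move a (s i) (s (i + 1)))) ∧
    (Z ≠ q → Nat.fib (c + 3) ≤ m)

/-- L4: staircase shape `<b` on `Y'`, `b, b+1` on `Z'`, `b+2` on `Z ≠ q`, parked `[b+3,K)` on `q`. -/
def L4 (m : ℕ) : Prop :=
  ∀ (s : ℕ → ℕ → Fin 3) (x b K : ℕ) (Y' Z' Z q : Fin 3),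
    b + 3 ≤ K →
    (∀ i, x ≤ i → i < x + m → ∃ a, a < K ∧ Move a (s i) (s (i + 1))) →
    (∀ j < b, s x j = Y') → s x b = Z' → s x (b + 1) = Z' → s x (b + 2) = Z →
    Z' ≠ Y' → Z' ≠ Z → Z ≠ q →
    (∀ j, b + 3 ≤ j → j < K → s x j = q) →
    (∀ j < K, s (x + m) j = q) →
    Nat.fib (b + 4) - 1 ≤ m


open Classical in
/-- Extract the first move with index `≥ c`, given that some disk `≥ c` changes. -/
lemma first_big {s : ℕ → ℕ → Fin 3} {x m K c jd : ℕ}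
    (hmv : ∀ i, x ≤ i → i < x + m → ∃ a, a < K ∧ Move a (s i) (s (i + 1)))
    (hjc : c ≤ jd) (hdiff : s (x + m) jd ≠ s x jd) :
    ∃ r a, x ≤ r ∧ r < x + m ∧ c ≤ a ∧ a < K ∧ Move a (s r) (s (r + 1)) ∧
      (∀ i, x ≤ i → i < r → ∃ a', a' < c ∧ Move a' (s i) (s (i + 1))) := by
  have hex : ∃ i, x ≤ i ∧ i < x + m ∧ ∃ a, c ≤ a ∧ a < K ∧ Move a (s i) (s (i + 1)) := by
    by_contra hno
    push_neg at hno
    apply hdiff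
    refine stable s c x (x + m) (by omega) ?_ jd hjc
    intro i h1 h2
    obtain ⟨a, haK, hma⟩ := hmv i h1 h2
    refine ⟨a, ?_, hma⟩
    by_contra hac
    exact absurd hma (hno i h1 h2 a (by omega) haK)
  set P : ℕ → Prop := fun i => x ≤ i ∧ i < x + m ∧ ∃ a, c ≤ a ∧ a < K ∧ Move a (s i) (s (i + 1))
  have hex' : ∃ i, P i := hex
  obtain ⟨h1, h2, a, hca, haK, hma⟩ := Nat.find_spec hex'
  refine ⟨Nat.find hex', a, h1, h2, hca, haK, hma, ?_⟩
  intro i hxi hir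
  obtain ⟨a', ha'K, hma'⟩ := hmv i hxi (by omega)
  refine ⟨a', ?_, hma'⟩
  by_contra hac
  exact Nat.find_min hex' hir ⟨hxi, by omega, a', by omega, ha'K, hma'⟩

lemma third_peg : ∀ (p q Y : Fin 3), p ≠ q → Y ≠ p → Y ≠ q →
    Y - p = -(q - p) ∧ q - Y = -(q - p) := by decide

lemma dir_eq : ∀ (p q : Fin 3), decide (q = p + 1) = decide (q - p = 1) := by decide

lemma stepL1 (m : ℕ) (ih : ∀ m', m' < m → L1 m' ∧ L2 m' ∧ L4 m') : L1 m := by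
  intro s x n p q hmv h0 h1 hpq
  match n with
  | 0 =>
    refine ⟨by simp [Nat.fib], ?_⟩
    intro hm
    have hm0 : m = 0 := by simpa [Nat.fib] using hm
    subst hm0
    rfl
  | 1 =>
    have hd : s (x + m) 0 ≠ s x 0 := by
      rw [h1 0 (by omega), h0 0 (by omega)]; exact hpq.symm
    have hm1 : 1 ≤ m := by
      rcases Nat.eq_zero_or_pos m with h | h
      · subst h; simp at hd
      · exact h
    have hfib3 : Nat.fib (1+2) = 2 := rfl
    refine ⟨by omega, ?_⟩
    intro hm
    have hm' : m = 1 := by omega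
    subst hm'
    obtain ⟨a, ha, hma⟩ := hmv x (le_refl x) (by omega)
    have ha0 : a = 0 := by omega
    subst ha0
    rw [dirWord_one_of_move0 s x hma]
    show _ = [decide (q - p = 1)]
    rw [h0 0 (by omega)]
    have : s (x + 1) 0 = q := h1 0 (by omega)
    rw [this, dir_eq]
  | (N+2) =>
    -- the first (N+1)-move
    have hdiff : s (x + m) (N+1) ≠ s x (N+1) := by
      rw [h1 (N+1) (by omega), h0 (N+1) (by omega)]; exact hpq.symm
    obtain ⟨r, a, hxr, hrm, hca, haK, hmva, hsmall⟩ :=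
      first_big (c := N+1) hmv (le_refl _) hdiff
    have ha : a = N + 1 := by omega
    subst ha
    have hstab : ∀ j, N + 1 ≤ j → s r j = s x j :=
      stable s (N+1) x r hxr hsmall
    obtain ⟨X, Yv, Zv, hXY, hYZ, hXZ, hX, hY, hZ, hfix⟩ := hmva
    have hXp : X = p := by rw [← hX, hstab (N+1) le_rfl, h0 (N+1) (by omega)]
    rw [hXp] at hXY hXZ hX
    -- prefix is an L1-path for the (N+1)-tower from p to Yv
    set m1 := r - x with hm1def
    have hxm1 : x + m1 = r := by omega
    have hm1m : m1 < m := by omega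
    have hpre := (ih m1 hm1m).1 s x (N+1) p Yv
      (by intro i hi1 hi2; exact hsmall i hi1 (by omega))
      (fun j hj => h0 j (by omega))
      (by rw [hxm1]; intro j hj; exact hY j hj)
      hXY
    -- state after the big move
    have hs1 : ∀ j, j < N → s (r+1) j = Yv := by
      intro j hj
      rw [hfix j (Or.inl (by omega))]
      exact hY j (by omega)
    have hs2 : s (r+1) N = Zv := hZ N (by omega) (by omega)
    have hs3 : s (r+1) (N+1) = Zv := hZ (N+1) (by omega) (by omega)
    -- suffix is an L2-path
    set m2 := x + m - (r + 1) with hm2def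
    have hxm2 : r + 1 + m2 = x + m := by omega
    have hm2m : m2 < m := by omega
    have hsuf := (ih m2 hm2m).2.1 s (r+1) N (N+2) Yv Zv q (by omega)
      (by intro i hi1 hi2; exact hmv i (by omega) (by omega))
      hs1 hs2 hs3 hYZ
      (by intro j hj1 hj2; omega)
      (by rw [hxm2]; exact h1)
    -- Fibonacci facts
    have hf1 : Nat.fib (N+4) = Nat.fib (N+2) + Nat.fib (N+3) := Nat.fib_add_two
    have hf2 : Nat.fib (N+3) = Nat.fib (N+1) + Nat.fib (N+2) := Nat.fib_add_two
    have hee1 : Nat.fib (N+1+2) = Nat.fib (N+3) := congrArg Nat.fib (by omega)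
    have hee2 : Nat.fib (N+2+2) = Nat.fib (N+4) := congrArg Nat.fib (by omega)
    rw [hee1] at hpre
    rw [hee2]
    have hfp2 : 0 < Nat.fib (N+2) := Nat.fib_pos.mpr (by omega)
    have hfp3 : 0 < Nat.fib (N+3) := Nat.fib_pos.mpr (by omega)
    have hmono : Nat.fib (N+2) ≤ Nat.fib (N+3) := Nat.fib_mono (by omega)
    have hmsum : m = m1 + 1 + m2 := by omega
    have hm2lb : Nat.fib (N+2) - 1 ≤ m2 := by
      rcases eq_or_ne Zv q with hZq | hZq
      · exact (hsuf.1 hZq).1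
      · have := hsuf.2 hZq; omega
    refine ⟨by omega, ?_⟩
    intro hm
    rcases eq_or_ne Zv q with hZq | hZq
    swap
    · have := hsuf.2 hZq; omega
    obtain ⟨hm2lb', hm2eq⟩ := hsuf.1 hZq
    have hm1eq : m1 = Nat.fib (N+3) - 1 := by omega
    have hm2eq' : m2 = Nat.fib (N+2) - 1 := by omega
    have hword1 : dirWord s x m1 = Wn (N+1) (Yv - p) := hpre.2 hm1eq
    -- suffix is an L1-path for the N-tower from Yv to q
    have hYq : Yv ≠ q := fun h => hYZ (h.trans hZq.symm)
    have hsufsmall := hm2eq hm2eq'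
    have hsuf1 := (ih m2 hm2m).1 s (r+1) N Yv q hsufsmall hs1
      (by rw [hxm2]; intro j hj; exact h1 j (by omega)) hYq
    have hword2 : dirWord s (r+1) m2 = Wn N (q - Yv) := hsuf1.2 hm2eq'
    -- no 0-move at step r
    have hnot0 : ¬ Move 0 (s r) (s (r+1)) := by
      intro h0m
      have := h0m.unique ⟨p, Yv, Zv, hXY, hYZ, hXZ, hX, hY, hZ, hfix⟩
      omega
    have hsplit : m = m1 + (1 + m2) := by omega
    rw [hsplit, dirWord_add, dirWord_add, hxm1, dirWord_one_of_not_move0 s r hnot0,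
      hword1, hword2]
    obtain ⟨he1, he2⟩ := third_peg p q Yv hpq (fun h => hXY h.symm) hYq
    show _ = Wn (N+2) (q - p)
    rw [show Wn (N+2) (q - p) = Wn (N+1) (-(q-p)) ++ Wn N (-(q-p)) from rfl, ← he1, he2, he1]
    simp


lemma stepL4 (m : ℕ) (ih : ∀ m', m' < m → L1 m' ∧ L2 m' ∧ L4 m') : L4 m := by
  intro s x b K Y' Z' Z q hK hmv hY hb hb1 hb2 hZY hZZ hZq hpark hend
  have hdiff : s (x + m) (b+2) ≠ s x (b+2) := by
    rw [hend (b+2) (by omega), hb2]; exact fun h => hZq h.symm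
  obtain ⟨r, a, hxr, hrm, hca, haK, hmva, hsmall⟩ :=
    first_big (c := b+2) hmv (le_refl _) hdiff
  have hstab : ∀ j, b + 2 ≤ j → s r j = s x j := stable s (b+2) x r hxr hsmall
  obtain ⟨X, Yv, Zv, hXY, hYZ, hXZ, hX, hYm, hZm, hfix⟩ := hmva
  set m1 := r - x with hm1def
  have hxm1 : x + m1 = r := by omega
  have hm1m : m1 < m := by omega
  set m2 := x + m - (r + 1) with hm2def
  have hxm2 : r + 1 + m2 = x + m := by omega
  have hm2m : m2 < m := by omega
  have hmsum : m = m1 + 1 + m2 := by omega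
  have hf4 : Nat.fib (b+4) = Nat.fib (b+2) + Nat.fib (b+3) := Nat.fib_add_two
  have hf5 : Nat.fib (b+5) = Nat.fib (b+3) + Nat.fib (b+4) := Nat.fib_add_two
  have hf3 : Nat.fib (b+3) = Nat.fib (b+1) + Nat.fib (b+2) := Nat.fib_add_two
  have hfp : 0 < Nat.fib (b+2) := Nat.fib_pos.mpr (by omega)
  rcases (by omega : a = b + 2 ∨ a = b + 3 ∨ b + 4 ≤ a) with ha | ha | ha
  · -- a = b+2 : the disk b+2 moves normally
    subst ha
    have hXZ' : X = Z := by rw [← hX, hstab (b+2) (le_refl _), hb2]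
    have hYvZ : Yv ≠ Z := fun h => hXY (hXZ' ▸ h.symm)
    -- prefix : L2 with c = b, target Yv
    have hpre := (ih m1 hm1m).2.1 s x b (b+2) Y' Z' Yv (le_refl _)
      (by intro i h1 h2; exact hsmall i h1 (by omega))
      hY hb hb1 (Ne.symm hZY)
      (by intro j h1 h2; omega)
      (by rw [hxm1]; intro j hj; exact hYm j (by omega))
    have hm1lb : Nat.fib (b+2) - 1 ≤ m1 := by
      rcases eq_or_ne Z' Yv with h | h
      · exact (hpre.1 h).1
      · have h1 := hpre.2 h
        have h2 : Nat.fib (b+2) ≤ Nat.fib (b+3) := Nat.fib_mono (by omega)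
        omega
    -- suffix : L2 with c = b+1
    have hZvq : Yv ≠ Zv := hYZ
    have hsuf := (ih m2 hm2m).2.1 s (r+1) (b+1) K Yv Zv q (by omega)
      (by intro i h1 h2; exact hmv i (by omega) (by omega))
      (by intro j hj
          rw [hfix j (Or.inl (by omega))]
          exact hYm j (by omega))
      (hZm (b+1) (by omega) (by omega))
      (hZm (b+2) (by omega) (by omega))
      hZvq
      (by intro j h1 h2
          rw [hfix j (Or.inr (by omega)), hstab j (by omega)]
          exact hpark j (by omega) h2)
      (by rw [hxm2]; exact hend)
    have hm2lb : Nat.fib (b+3) - 1 ≤ m2 := by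
      rcases eq_or_ne Zv q with h | h
      · exact (hsuf.1 h).1
      · have h1 : Nat.fib (b+4) ≤ m2 := hsuf.2 h
        have h2 : Nat.fib (b+3) ≤ Nat.fib (b+4) := Nat.fib_mono (by omega)
        omega
    omega
  · -- a = b+3 : a parked disk grabs disk b+2
    subst ha
    have hb3K : b + 4 ≤ K := by omega
    have hXq : X = q := by
      rw [← hX, hstab (b+3) (by omega)]
      exact hpark (b+3) (by omega) (by omega)
    have hYvZ : Yv = Z := by
      have := hYm (b+2) (by omega)
      rw [hstab (b+2) (le_refl _), hb2] at this
      exact this.symm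
    -- prefix : L2 with c = b, target Z
    have hpre := (ih m1 hm1m).2.1 s x b (b+2) Y' Z' Z (le_refl _)
      (by intro i h1 h2; exact hsmall i h1 (by omega))
      hY hb hb1 (Ne.symm hZY)
      (by intro j h1 h2; omega)
      (by rw [hxm1]; intro j hj
          rw [hYm j (by omega), hYvZ])
    have hm1lb : Nat.fib (b+3) ≤ m1 := hpre.2 hZZ
    -- suffix : L2 with c = b+2
    have hZvq : Zv ≠ q := fun h => hXZ (hXq.trans h.symm)
    have hsuf := (ih m2 hm2m).2.1 s (r+1) (b+2) K Z Zv q hb3K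
      (by intro i h1 h2; exact hmv i (by omega) (by omega))
      (by intro j hj
          rw [hfix j (Or.inl (by omega)), hYm j (by omega), hYvZ])
      (hZm (b+2) (by omega) (by omega))
      (hZm (b+3) (by omega) (by omega))
      (fun h => hYZ (hYvZ.symm ▸ h))
      (by intro j h1 h2
          rw [hfix j (Or.inr (by omega)), hstab j (by omega)]
          exact hpark j (by omega) h2)
      (by rw [hxm2]; exact hend)
    have hm2lb : Nat.fib (b+5) ≤ m2 := hsuf.2 hZvq
    have : Nat.fib (b+4) ≤ Nat.fib (b+5) := Nat.fib_mono (by omega)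
    omega
  · -- a ≥ b+4 : impossible
    exfalso
    have hXq : X = q := by
      rw [← hX, hstab a (by omega)]
      exact hpark a (by omega) (by omega)
    have h1' : s r (a-1) = Yv := hYm (a-1) (by omega)
    rw [hstab (a-1) (by omega), hpark (a-1) (by omega) (by omega)] at h1'
    exact hXY (hXq.trans h1')


open Classical in
lemma first_big_of_ex {s : ℕ → ℕ → Fin 3} {x m K c : ℕ}
    (hmv : ∀ i, x ≤ i → i < x + m → ∃ a, a < K ∧ Move a (s i) (s (i + 1)))
    (hex : ∃ i, x ≤ i ∧ i < x + m ∧ ∃ a, c ≤ a ∧ a < K ∧ Move a (s i) (s (i + 1))) :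
    ∃ r a, x ≤ r ∧ r < x + m ∧ c ≤ a ∧ a < K ∧ Move a (s r) (s (r + 1)) ∧
      (∀ i, x ≤ i → i < r → ∃ a', a' < c ∧ Move a' (s i) (s (i + 1))) := by
  obtain ⟨h1, h2, a, hca, haK, hma⟩ := Nat.find_spec hex
  refine ⟨Nat.find hex, a, h1, h2, hca, haK, hma, ?_⟩
  intro i hxi hir
  obtain ⟨a', ha'K, hma'⟩ := hmv i hxi (by omega)
  refine ⟨a', ?_, hma'⟩
  by_contra hac
  exact Nat.find_min hex hir ⟨hxi, by omega, a', by omega, ha'K, hma'⟩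

lemma stepL2 (m : ℕ) (hL1 : L1 m) (ih : ∀ m', m' < m → L1 m' ∧ L2 m' ∧ L4 m') : L2 m := by
  intro s x c K Y Z q hK hmv hY hc hc1 hYZ hpark hend
  have hf2 : Nat.fib (c+4) = Nat.fib (c+2) + Nat.fib (c+3) := Nat.fib_add_two
  have hf3 : Nat.fib (c+3) = Nat.fib (c+1) + Nat.fib (c+2) := Nat.fib_add_two
  have hfp : 0 < Nat.fib (c+2) := Nat.fib_pos.mpr (by omega)
  have hfp3 : 0 < Nat.fib (c+3) := Nat.fib_pos.mpr (by omega)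
  constructor
  · -- Z = q
    intro hZq
    by_cases hall : ∀ i, x ≤ i → i < x + m → ∃ a, a < c ∧ Move a (s i) (s (i + 1))
    · have hL := hL1 s x c Y q hall hY (fun j hj => hend j (by omega))
        (fun h => hYZ (h.trans hZq.symm))
      exact ⟨hL.1, fun _ => hall⟩
    · -- a big move exists : show m is strictly larger than fib (c+2) - 1
      push_neg at hall
      obtain ⟨i0, hi0x, hi0m, hno⟩ := hall
      have hex : ∃ i, x ≤ i ∧ i < x + m ∧ ∃ a, c ≤ a ∧ a < K ∧ Move a (s i) (s (i + 1)) := by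
        obtain ⟨a, haK, hma⟩ := hmv i0 hi0x hi0m
        refine ⟨i0, hi0x, hi0m, a, ?_, haK, hma⟩
        by_contra hac
        exact hno a (by omega) hma
      obtain ⟨r, a, hxr, hrm, hca, haK, hmva, hsmall⟩ := first_big_of_ex hmv hex
      have hstab : ∀ j, c ≤ j → s r j = s x j := stable s c x r hxr hsmall
      obtain ⟨X, Yv, Zv, hXY, hYZ', hXZ, hX, hYm, hZm, hfix⟩ := hmva
      set m2 := x + m - (r + 1) with hm2def
      have hxm2 : r + 1 + m2 = x + m := by omega
      have hm2m : m2 < m := by omega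
      have hstrict : Nat.fib (c+2) - 1 < m := by
        rcases (by omega : a = c ∨ a = c + 1 ∨ a = c + 2 ∨ c + 3 ≤ a) with ha | ha | ha | ha
        · -- a = c
          have ha' : c = a := ha.symm
          subst ha'
          match c, hY, hc, hc1, hYm, hZm, hfix, hstab, hpark with
          | 0, hY, hc, hc1, hYm, hZm, hfix, hstab, hpark =>
            simp [Nat.fib]
            omega
          | (b+1), hY, hc, hc1, hYm, hZm, hfix, hstab, hpark =>
            have hXZ' : X = Z := by rw [← hX, hstab (b+1) (le_refl _), hc]
            have hYvq : Yv ≠ q := fun h => hXY (by rw [hXZ', hZq, h])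
            have hZvq : Zv ≠ q := fun h => hXZ (by rw [hXZ', hZq, h])
            have hsuf := (ih m2 hm2m).2.1 s (r+1) b K Yv Zv q (by omega)
              (by intro i h1 h2; exact hmv i (by omega) (by omega))
              (by intro j hj
                  rw [hfix j (Or.inl (by omega))]
                  exact hYm j (by omega))
              (hZm b (by omega) (by omega))
              (hZm (b+1) (by omega) (by omega))
              hYZ'
              (by intro j h1 h2
                  rw [hfix j (Or.inr (by omega)), hstab j (by omega)]
                  rcases (by omega : j = b + 2 ∨ b + 3 ≤ j) with h | h
                  · rw [h]; rw [h] at h2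
                    exact hc1.trans hZq
                  · exact hpark j (by omega) h2)
              (by rw [hxm2]; exact hend)
            have hm2lb : Nat.fib (b+3) ≤ m2 := hsuf.2 hZvq
            have : Nat.fib (b+1+2) = Nat.fib (b+3) := congrArg Nat.fib (by omega)
            omega
        · -- a = c+1 : impossible
          exfalso
          subst ha
          have hXZ' : X = Z := by rw [← hX, hstab (c+1) (by omega), hc1]
          have h2 : s r c = Yv := hYm c (by omega)
          rw [hstab c (le_refl _), hc] at h2
          exact hXY (by rw [hXZ', ← h2])
        · -- a = c+2 : needs Z ≠ q, contradiction with Z = q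
          exfalso
          subst ha
          have hXq : X = q := by
            rw [← hX, hstab (c+2) (by omega)]
            exact hpark (c+2) (by omega) (by omega)
          have h2 : s r c = Yv := hYm c (by omega)
          rw [hstab c (le_refl _), hc] at h2
          exact hXY (by rw [hXq, ← h2, ← hZq])
        · -- a ≥ c+3 : impossible
          exfalso
          have hXq : X = q := by
            rw [← hX, hstab a (by omega)]
            exact hpark a (by omega) (by omega)
          have h1' : s r (a-1) = Yv := hYm (a-1) (by omega)
          rw [hstab (a-1) (by omega), hpark (a-1) (by omega) (by omega)] at h1'
          exact hXY (hXq.trans h1')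
      exact ⟨by omega, fun h => by omega⟩
  · -- Z ≠ q
    intro hZq
    have hdiff : s (x + m) (c+1) ≠ s x (c+1) := by
      rw [hend (c+1) (by omega), hc1]; exact fun h => hZq h.symm
    obtain ⟨r, a, hxr, hrm, hca, haK, hmva, hsmall⟩ :=
      first_big (c := c) hmv (by omega) hdiff
    have hstab : ∀ j, c ≤ j → s r j = s x j := stable s c x r hxr hsmall
    obtain ⟨X, Yv, Zv, hXY, hYZ', hXZ, hX, hYm, hZm, hfix⟩ := hmva
    set m1 := r - x with hm1def
    have hxm1 : x + m1 = r := by omega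
    have hm1m : m1 < m := by omega
    set m2 := x + m - (r + 1) with hm2def
    have hxm2 : r + 1 + m2 = x + m := by omega
    have hm2m : m2 < m := by omega
    rcases (by omega : a = c ∨ a = c + 1 ∨ a = c + 2 ∨ c + 3 ≤ a) with ha | ha | ha | ha
    · -- a = c
      have ha' : c = a := ha.symm
      subst ha'
      match c, hY, hc, hc1, hYm, hZm, hfix, hstab, hpark, hK with
      | 0, hY, hc, hc1, hYm, hZm, hfix, hstab, hpark, hK =>
        -- single-disk move; disk 1 still needs to move
        have h1 : s (r+1) 1 = Z := by
          rw [hfix 1 (Or.inr (by omega)), hstab 1 (by omega), hc1]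
        have hne : r + 1 ≠ x + m := by
          intro h
          rw [h, hend 1 (by omega)] at h1
          exact hZq h1.symm
        simp [Nat.fib]
        omega
      | (b+1), hY, hc, hc1, hYm, hZm, hfix, hstab, hpark, hK =>
        have hXZ' : X = Z := by rw [← hX, hstab (b+1) (le_refl _), hc]
        have hsuf := (ih m2 hm2m).2.2 s (r+1) b K Yv Zv Z q (by omega)
          (by intro i h1 h2; exact hmv i (by omega) (by omega))
          (by intro j hj
              rw [hfix j (Or.inl (by omega))]
              exact hYm j (by omega))
          (hZm b (by omega) (by omega))
          (hZm (b+1) (by omega) (by omega))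
          (by rw [hfix (b+2) (Or.inr (by omega)), hstab (b+2) (by omega)]; exact hc1)
          (fun h => hYZ' h.symm)
          (fun h => hXZ (by rw [hXZ', ← h]))
          hZq
          (by intro j h1 h2
              rw [hfix j (Or.inr (by omega)), hstab j (by omega)]
              exact hpark j (by omega) h2)
          (by rw [hxm2]; exact hend)
        have he : Nat.fib (b+4) = Nat.fib (b+1+3) := congrArg Nat.fib (by omega)
        have hfpb : 0 < Nat.fib (b+4) := Nat.fib_pos.mpr (by omega)
        omega
    · -- a = c+1 : impossible
      exfalso
      subst ha
      have hXZ' : X = Z := by rw [← hX, hstab (c+1) (by omega), hc1]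
      have h2 : s r c = Yv := hYm c (by omega)
      rw [hstab c (le_refl _), hc] at h2
      exact hXY (by rw [hXZ', ← h2])
    · -- a = c+2 : a parked disk grabs disk c+1
      subst ha
      have hXq : X = q := by
        rw [← hX, hstab (c+2) (by omega)]
        exact hpark (c+2) (by omega) (by omega)
      have hYvZ : Yv = Z := by
        have h2 : s r c = Yv := hYm c (by omega)
        rw [hstab c (le_refl _), hc] at h2
        exact h2.symm
      -- prefix : L1 with the c-tower moving from Y to Z
      have hpre := (ih m1 hm1m).1 s x c Y Z
        (by intro i h1 h2; exact hsmall i h1 (by omega))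
        hY
        (by rw [hxm1]; intro j hj
            rw [hYm j (by omega), hYvZ])
        (fun h => hYZ h)
      have hm1lb : Nat.fib (c+2) - 1 ≤ m1 := hpre.1
      -- suffix : L2 with c' = c+1
      have hZvq : Zv ≠ q := fun h => hXZ (hXq.trans h.symm)
      have hsuf := (ih m2 hm2m).2.1 s (r+1) (c+1) K Z Zv q (by omega)
        (by intro i h1 h2; exact hmv i (by omega) (by omega))
        (by intro j hj
            rw [hfix j (Or.inl (by omega))]
            rcases (by omega : j < c ∨ j = c) with h | h
            · rw [hYm j (by omega), hYvZ]
            · rw [h, hstab c (le_refl _), hc])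
        (hZm (c+1) (by omega) (by omega))
        (hZm (c+2) (by omega) (by omega))
        (fun h => hYZ' (hYvZ.symm ▸ h))
        (by intro j h1 h2
            rw [hfix j (Or.inr (by omega)), hstab j (by omega)]
            exact hpark j (by omega) h2)
        (by rw [hxm2]; exact hend)
      have hm2lb : Nat.fib (c+4) ≤ m2 := by
        have := hsuf.2 hZvq
        have he : Nat.fib (c+1+3) = Nat.fib (c+4) := congrArg Nat.fib (by omega)
        omega
      omega
    · -- a ≥ c+3 : impossible
      exfalso
      have hXq : X = q := by
        rw [← hX, hstab a (by omega)]
        exact hpark a (by omega) (by omega)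
      have h1' : s r (a-1) = Yv := hYm (a-1) (by omega)
      rw [hstab (a-1) (by omega), hpark (a-1) (by omega) (by omega)] at h1'
      exact hXY (hXq.trans h1')


lemma grand : ∀ m, L1 m ∧ L2 m ∧ L4 m := by
  intro m
  induction m using Nat.strong_induction_on with
  | _ m ih =>
    exact ⟨stepL1 m ih, stepL2 m (stepL1 m ih) ih, stepL4 m ih⟩

lemma zeck_bound : ∀ M, 1 ≤ M → ∀ u : ℕ → ℕ, (∀ i, u i ≤ 1) →
    (∀ i, ¬(u i = 1 ∧ u (i+1) = 1)) → (∀ i, u i ≠ 0 → 2 ≤ i ∧ i < M) →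
    ∑ i ∈ Finset.range M, u i * Nat.fib i < Nat.fib M := by
  intro M
  induction M using Nat.strong_induction_on with
  | _ M ihM =>
    intro hM u hu01 hu11 hsupp
    match M, hM with
    | 1, _ =>
      simp [Finset.sum_range_succ, Nat.fib]
    | (L+2), _ =>
      have hUL : u (L+1) = 0 ∨ u (L+1) = 1 := by have := hu01 (L+1); omega
      rcases hUL with hUL | hUL
      · rw [Finset.sum_range_succ, hUL]
        have hlt := ihM (L+1) (by omega) (by omega) u hu01 hu11
          (by intro i hi
              have := hsupp i hi
              rcases (by omega : i < L+1 ∨ i = L+1) with h | h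
              · exact ⟨this.1, h⟩
              · rw [h] at hi; exact absurd hUL hi)
        simp only [Nat.zero_mul]
        have hm : Nat.fib (L+1) ≤ Nat.fib (L+2) := Nat.fib_mono (by omega)
        omega
      · -- u (L+1) = 1 so u L = 0
        have hL2 : 2 ≤ L + 1 := (hsupp (L+1) (by omega)).1
        have hUL0 : u L = 0 := by
          have h := hu11 L
          have := hu01 L
          omega
        rw [Finset.sum_range_succ, Finset.sum_range_succ, hUL0, hUL]
        have hlt : ∑ i ∈ Finset.range L, u i * Nat.fib i < Nat.fib L := by
          rcases (by omega : L = 1 ∨ 2 ≤ L) with h | h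
          · subst h
            simp [Finset.sum_range_succ, Nat.fib]
          · set u' : ℕ → ℕ := fun i => if i < L then u i else 0 with hu'
            have heq : ∑ i ∈ Finset.range L, u i * Nat.fib i
                = ∑ i ∈ Finset.range L, u' i * Nat.fib i := by
              refine Finset.sum_congr rfl ?_
              intro i hi
              rw [Finset.mem_range] at hi
              simp [hu', hi]
            rw [heq]
            refine ihM L (by omega) (by omega) u' ?_ ?_ ?_
            · intro i; simp only [hu']; split
              · exact hu01 i
              · omega
            · intro i ⟨h1, h2⟩
              simp only [hu'] at h1 h2
              split at h1
              · split at h2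
                · exact hu11 i ⟨h1, h2⟩
                · omega
              · omega
            · intro i hi
              simp only [hu'] at hi
              split at hi
              · exact ⟨(hsupp i hi).1, by omega⟩
              · omega
        have hfib : Nat.fib (L+2) = Nat.fib L + Nat.fib (L+1) := Nat.fib_add_two
        omega

lemma zeck_main : ∀ n (d : Fin 3), (d = 1 ∨ d = 2) → ∀ (k : ℕ) (u : ℕ → ℕ),
    k < Nat.fib n → (∀ i, u i ≤ 1) → (∀ i, ¬(u i = 1 ∧ u (i+1) = 1)) →
    (∀ i, u i ≠ 0 → 2 ≤ i ∧ i < n) →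
    ∑ i ∈ Finset.range n, u i * Nat.fib i = k →
    ((Wn n d).getD k false = true ↔
      (∑ i ∈ Finset.range n, u i + n + (if d = 1 then 1 else 0)) % 2 = 0) := by
  intro n
  induction n using Nat.strong_induction_on with
  | _ n ihn =>
    intro d hd k u hk hu01 hu11 hsupp hsum
    match n, hk, hsupp, hsum with
    | 0, hk, hsupp, hsum => simp [Nat.fib] at hk
    | 1, hk, hsupp, hsum =>
      have hk0 : k = 0 := by simp [Nat.fib] at hk; omega
      subst hk0
      have hz : ∀ i, u i = 0 := by
        intro i
        by_contra h
        have := hsupp i h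
        omega
      have hsz : ∑ i ∈ Finset.range 1, u i = 0 :=
        Finset.sum_eq_zero (fun i _ => hz i)
      rw [hsz]
      show ((Wn 1 d).getD 0 false = true) ↔ _
      rcases hd with hd | hd <;> subst hd <;> simp [Wn]
    | (N+2), hk, hsupp, hsum =>
      have hd' : (-d : Fin 3) = 1 ∨ (-d : Fin 3) = 2 := by
        rcases hd with hd | hd <;> subst hd <;> [right; left] <;> rfl
      have hlen : (Wn (N+1) (-d)).length = Nat.fib (N+1) := Wn_length _ _
      have hee : (if (-d : Fin 3) = 1 then 1 else 0) + (if d = 1 then 1 else 0) = 1 := by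
        rcases hd with hd | hd <;> subst hd <;> rfl
      have hWsplit : Wn (N+2) d = Wn (N+1) (-d) ++ Wn N (-d) := rfl
      rcases Nat.lt_or_ge k (Nat.fib (N+1)) with hks | hks
      · -- k in the left part
        have hu1 : u (N+1) = 0 := by
          by_contra h
          have h1 : u (N+1) * Nat.fib (N+1) ≤ ∑ i ∈ Finset.range (N+2), u i * Nat.fib i :=
            Finset.single_le_sum (f := fun i => u i * Nat.fib i)
              (fun i _ => Nat.zero_le _) (Finset.mem_range.mpr (by omega))
          have h2 : u (N+1) = 1 := by have := hu01 (N+1); omega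
          rw [hsum, h2, one_mul] at h1
          omega
        have hsum' : ∑ i ∈ Finset.range (N+1), u i * Nat.fib i = k := by
          have h := hsum
          rw [Finset.sum_range_succ, hu1, Nat.zero_mul, Nat.add_zero] at h
          exact h
        have hsupp' : ∀ i, u i ≠ 0 → 2 ≤ i ∧ i < N+1 := by
          intro i hi
          have := hsupp i hi
          rcases (by omega : i < N+1 ∨ i = N+1) with h | h
          · exact ⟨this.1, h⟩
          · rw [h] at hi; exact absurd hu1 hi
        have hIH := ihn (N+1) (by omega) (-d) hd' k u hks hu01 hu11 hsupp' hsum'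
        rw [hWsplit, List.getD_append _ _ _ k (by rw [hlen]; exact hks), hIH]
        have hsu : ∑ i ∈ Finset.range (N+2), u i = ∑ i ∈ Finset.range (N+1), u i := by
          rw [Finset.sum_range_succ, hu1]
          simp
        rw [hsu]
        rcases hd with hd | hd <;> subst hd <;>
          simp only [show (if (-(1:Fin 3)) = 1 then (1:ℕ) else 0) = 0 from rfl,
            show (if ((1:Fin 3)) = 1 then (1:ℕ) else 0) = 1 from rfl,
            show (if (-(2:Fin 3)) = 1 then (1:ℕ) else 0) = 1 from rfl,
            show (if ((2:Fin 3)) = 1 then (1:ℕ) else 0) = 0 from rfl] at * <;> omega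
      · -- k in the right part
        match N, hk, hks, hsupp, hsum, ihn with
        | 0, hk, hks, hsupp, hsum, ihn =>
          exfalso
          have h1 : Nat.fib (0+1) = 1 := rfl
          have h2 : Nat.fib (0+2) = 1 := rfl
          omega
        | (N'+1), hk, hks, hsupp, hsum, ihn =>
          set N := N' + 1 with hN
          have hu1 : u (N+1) = 1 := by
            by_contra h
            have hu10 : u (N+1) = 0 := by have := hu01 (N+1); omega
            have : ∑ i ∈ Finset.range (N+1), u i * Nat.fib i < Nat.fib (N+1) := by
              refine zeck_bound (N+1) (by omega) u hu01 hu11 ?_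
              intro i hi
              have := hsupp i hi
              rcases (by omega : i < N+1 ∨ i = N+1) with h' | h'
              · exact ⟨this.1, h'⟩
              · rw [h'] at hi; exact absurd hu10 hi
            have : ∑ i ∈ Finset.range (N+2), u i * Nat.fib i < Nat.fib (N+1) := by
              rw [Finset.sum_range_succ, hu10]
              simpa using this
            omega
          have hu0 : u N = 0 := by
            have h := hu11 N
            have := hu01 N
            omega
          have hsum' : ∑ i ∈ Finset.range N, u i * Nat.fib i = k - Nat.fib (N+1) := by
            have := hsum
            rw [Finset.sum_range_succ, Finset.sum_range_succ, hu0, hu1] at this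
            simp at this
            omega
          set u' : ℕ → ℕ := fun i => if i < N then u i else 0 with hu'
          have hequ : ∑ i ∈ Finset.range N, u' i * Nat.fib i
              = ∑ i ∈ Finset.range N, u i * Nat.fib i := by
            refine Finset.sum_congr rfl ?_
            intro i hi
            rw [Finset.mem_range] at hi
            simp [hu', hi]
          have hequ2 : ∑ i ∈ Finset.range N, u' i = ∑ i ∈ Finset.range N, u i := by
            refine Finset.sum_congr rfl ?_
            intro i hi
            rw [Finset.mem_range] at hi
            simp [hu', hi]
          have hk' : k - Nat.fib (N+1) < Nat.fib N := by
            have hb : ∑ i ∈ Finset.range N, u' i * Nat.fib i < Nat.fib N := by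
              refine zeck_bound N (by omega) u' ?_ ?_ ?_
              · intro i; simp only [hu']; split
                · exact hu01 i
                · omega
              · intro i ⟨h1, h2⟩
                simp only [hu'] at h1 h2
                split at h1
                · split at h2
                  · exact hu11 i ⟨h1, h2⟩
                  · omega
                · omega
              · intro i hi
                simp only [hu'] at hi
                split at hi
                · exact ⟨(hsupp i hi).1, by omega⟩
                · omega
            rw [hequ, hsum'] at hb
            exact hb
          have hIH := ihn N (by omega) (-d) hd' (k - Nat.fib (N+1)) u' hk'
            (by intro i; simp only [hu']; split
                · exact hu01 i
                · omega)
            (by intro i ⟨h1, h2⟩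
                simp only [hu'] at h1 h2
                split at h1
                · split at h2
                  · exact hu11 i ⟨h1, h2⟩
                  · omega
                · omega)
            (by intro i hi
                simp only [hu'] at hi
                split at hi
                · exact ⟨(hsupp i hi).1, by omega⟩
                · omega)
            (by rw [hequ]; exact hsum')
          rw [hWsplit, List.getD_append_right _ _ _ k (by rw [hlen]; exact hks), hlen, hIH, hequ2]
          have hsu : ∑ i ∈ Finset.range (N+2), u i = ∑ i ∈ Finset.range N, u i + 1 := by
            rw [Finset.sum_range_succ, Finset.sum_range_succ, hu0, hu1]
          rw [hsu]
          rcases hd with hd | hd <;> subst hd <;>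
            simp only [show (if (-(1:Fin 3)) = 1 then (1:ℕ) else 0) = 0 from rfl,
            show (if ((1:Fin 3)) = 1 then (1:ℕ) else 0) = 1 from rfl,
            show (if (-(2:Fin 3)) = 1 then (1:ℕ) else 0) = 1 from rfl,
            show (if ((2:Fin 3)) = 1 then (1:ℕ) else 0) = 0 from rfl] at * <;> omega


/-- Lift a `Fin n`-state to a ℕ-indexed state. -/
def lift (n : ℕ) (f : Fin n → Fin 3) : ℕ → Fin 3 :=
  fun j => if h : j < n then f ⟨j, h⟩ else 0

lemma lift_eval {n : ℕ} (f : Fin n → Fin 3) (i : Fin n) : lift n f (i : ℕ) = f i := by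
  simp [lift, i.isLt]

end HanoiFibAux




namespace HanoiFibAux

lemma fibMove_to_move {n k : ℕ} {f f' : Fin n → Fin 3} (h : FibMove n k f f') :
    Move (k - 1) (lift n f) (lift n f') := by
  obtain ⟨hk1, hkn, X, Y, Z, hXY, hYZ, hXZ, h1, h2, h3, h4, h5⟩ := h
  have hlt : k - 1 < n := by omega
  refine ⟨X, Y, Z, hXY, hYZ, hXZ, ?_, ?_, ?_, ?_⟩
  · simp only [lift, dif_pos hlt]
    exact h1 ⟨k - 1, hlt⟩ (by show k - 1 + 1 = k; omega)
  · intro j hj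
    have hjn : j < n := by omega
    simp only [lift, dif_pos hjn]
    exact h3 ⟨j, hjn⟩ (by show j + 1 < k; omega)
  · intro j hj1 hj2
    have hjn : j < n := by omega
    simp only [lift, dif_pos hjn]
    refine h4 ⟨j, hjn⟩ ?_
    show j + 1 = k ∨ j + 2 = k
    omega
  · intro j hj
    rcases Nat.lt_or_ge j n with hjn | hjn
    · simp only [lift, dif_pos hjn]
      exact h5 ⟨j, hjn⟩ (by show j + 1 ≠ k; omega) (by show j + 2 ≠ k; omega)
    · simp only [lift, dif_neg (by omega : ¬ j < n)]

lemma move0_iff_fibMove {n : ℕ} (hn : 0 < n) (f f' : Fin n → Fin 3) :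
    Move 0 (lift n f) (lift n f') ↔ FibMove n 1 f f' := by
  constructor
  · rintro ⟨X, Y, Z, hXY, hYZ, hXZ, h1, h2, h3, h4⟩
    refine ⟨le_refl 1, hn, X, Y, Z, hXY, hYZ, hXZ, ?_, ?_, ?_, ?_, ?_⟩
    · intro i hi
      have hival : (i : ℕ) = 0 := by omega
      rw [← lift_eval f i, hival]
      exact h1
    · intro i hi; omega
    · intro i hi; omega
    · intro i hi
      have hival : (i : ℕ) = 0 := by omega
      rw [← lift_eval f' i, hival]
      exact h3 0 (by omega) (by omega)
    · intro i hi1 hi2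
      have hival : 0 < (i : ℕ) := by omega
      rw [← lift_eval f' i, ← lift_eval f i]
      exact h4 (i : ℕ) (Or.inr hival)
  · intro h
    have := fibMove_to_move h
    simpa using this

lemma muWord_eq_dirWord (n : ℕ) (hn : 0 < n) (s : ℕ → Fin n → Fin 3) :
    ∀ m : ℕ,
      ((List.range m).filter (fun i => decide (FibMove n 1 (s i) (s (i + 1))))).map
        (fun i => if h : 0 < n then decide (s (i + 1) ⟨0, h⟩ = s i ⟨0, h⟩ + 1) else true)
      = dirWord (fun i => lift n (s i)) 0 m := by
  intro m
  induction m with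
  | zero => rfl
  | succ m ih =>
    rw [List.range_succ, List.filter_append, List.map_append, ih, dirWord, Nat.zero_add]
    congr 1
    by_cases hF : FibMove n 1 (s m) (s (m + 1))
    · have hM : Move 0 (lift n (s m)) (lift n (s (m + 1))) :=
        (move0_iff_fibMove hn _ _).mpr hF
      have hd : decide (FibMove n 1 (s m) (s (m + 1))) = true := decide_eq_true hF
      rw [if_pos hM, List.filter_singleton, hd]
      simp only [cond_true, List.map_cons, List.map_nil, dif_pos hn]
      congr 1
      have e1 : lift n (s (m + 1)) 0 = s (m + 1) ⟨0, hn⟩ := by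
        simp only [lift, dif_pos hn]
      have e2 : lift n (s m) 0 = s m ⟨0, hn⟩ := by
        simp only [lift, dif_pos hn]
      rw [e1, e2]
    · have hM : ¬ Move 0 (lift n (s m)) (lift n (s (m + 1))) :=
        fun h => hF ((move0_iff_fibMove hn _ _).mp h)
      have hd : decide (FibMove n 1 (s m) (s (m + 1))) = false :=
        decide_eq_false hF
      rw [if_neg hM, List.filter_singleton, hd]
      rfl

end HanoiFibAux
/-- For `n ≥ 1` and `0 ≤ k < F n`, the `(k+1)`-st letter of `μ_n` is
`r` (i.e. `true`) if and only if the number of `1`s in the Zeckendorf expansion of `k`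
(given by the digit sequence `u`, the empty expansion when `k = 0`) has the same parity
as `n`. -/
theorem hanoiFibonacci_mu_letter (n : ℕ) (hn : 1 ≤ n)
    (s : ℕ → (Fin n → Fin 3)) (hs : IsSolution n (Nat.fib (n + 2) - 1) s)
    (k : ℕ) (hk : k < Nat.fib n)
    (u : ℕ → ℕ)
    (hu01 : ∀ i, u i ≤ 1) (hu11 : ∀ i, ¬(u i = 1 ∧ u (i + 1) = 1))
    (husupp : ∀ i, i < 2 ∨ n + 1 < i → u i = 0)
    (husum : ∑ i ∈ Finset.range (n + 2), u i * Nat.fib i = k) :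
    (muWord n s).getD k false = true ↔
      (∑ i ∈ Finset.range (n + 2), u i) % 2 = n % 2 := by
  classical
  obtain ⟨hstart, hfin, hmv⟩ := hs
  set m := Nat.fib (n + 2) - 1 with hmdef
  have hn0 : 0 < n := hn
  set S : ℕ → ℕ → Fin 3 := fun i => HanoiFibAux.lift n (s i) with hSdef
  have hmoves : ∀ i, 0 ≤ i → i < 0 + m → ∃ a, a < n ∧ HanoiFibAux.Move a (S i) (S (i+1)) := by
    intro i _ hi
    obtain ⟨k', hk'⟩ := hmv i (by omega)
    have h1 := hk'.1
    have h2 := hk'.2.1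
    exact ⟨k' - 1, by omega, HanoiFibAux.fibMove_to_move hk'⟩
  have hL1 := (HanoiFibAux.grand m).1 S 0 n 0 2 hmoves
    (by intro j hj
        show HanoiFibAux.lift n (s 0) j = 0
        rw [hstart]
        simp [HanoiFibAux.lift, hj])
    (by intro j hj
        show HanoiFibAux.lift n (s (0 + m)) j = 2
        rw [Nat.zero_add, hfin]
        simp [HanoiFibAux.lift, hj])
    (by decide)
  have hword : HanoiFibAux.dirWord S 0 m = HanoiFibAux.Wn n 2 := by
    have h2 := hL1.2 hmdef
    have he : (2 - 0 : Fin 3) = 2 := by decide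
    rw [he] at h2
    exact h2
  have hmu : muWord n s = HanoiFibAux.dirWord S 0 m :=
    HanoiFibAux.muWord_eq_dirWord n hn0 s m
  have hle : ∀ j, j < n + 2 → u j = 1 → Nat.fib j ≤ k := by
    intro j hj hj1
    have h1 : u j * Nat.fib j ≤ ∑ i ∈ Finset.range (n+2), u i * Nat.fib i :=
      Finset.single_le_sum (f := fun i => u i * Nat.fib i) (fun i _ => Nat.zero_le _)
        (Finset.mem_range.mpr hj)
    rw [husum, hj1, one_mul] at h1
    exact h1
  have hun : u n = 0 := by
    by_contra h
    have h1 : u n = 1 := by have := hu01 n; omega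
    have := hle n (by omega) h1
    omega
  have hun1 : u (n+1) = 0 := by
    by_contra h
    have h1 : u (n+1) = 1 := by have := hu01 (n+1); omega
    have h2 := hle (n+1) (by omega) h1
    have h3 : Nat.fib n ≤ Nat.fib (n+1) := Nat.fib_mono (by omega)
    omega
  have hsupp' : ∀ i, u i ≠ 0 → 2 ≤ i ∧ i < n := by
    intro i hi
    have h := husupp i
    constructor
    · by_contra h2
      exact hi (h (Or.inl (by omega)))
    · by_contra h2
      rcases (by omega : i = n ∨ i = n + 1 ∨ n + 1 < i) with h3 | h3 | h3
      · rw [h3] at hi; exact hi hun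
      · rw [h3] at hi; exact hi hun1
      · exact hi (h (Or.inr h3))
  have hsum' : ∑ i ∈ Finset.range n, u i * Nat.fib i = k := by
    have h := husum
    rw [Finset.sum_range_succ, Finset.sum_range_succ, hun, hun1] at h
    simpa using h
  have hzeck := HanoiFibAux.zeck_main n 2 (Or.inr rfl) k u hk hu01 hu11 hsupp' hsum'
  have hsu : ∑ i ∈ Finset.range (n+2), u i = ∑ i ∈ Finset.range n, u i := by
    rw [Finset.sum_range_succ, Finset.sum_range_succ, hun, hun1]
    simp
  rw [hmu, hword, hzeck, hsu]
  have hite : (if (2 : Fin 3) = 1 then (1:ℕ) else 0) = 0 := rfl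
  rw [hite]
  constructor <;> intro h <;> omega
end
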